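/- arXiv:0809.4405 — 6 statements merged into one kernel-verified Lean document; each statement's English description precedes it below -/
import Mathlib

section
/- Let X be a real random variable with E[e^{sX}] < ∞ for some s > 0, and let r ∈ (0, s). Then E[e^{rX}] < ∞, and the quantity h(r,s) defined by the equation E[e^{rX}] = e^{-h(r,s)} · E[e^{sX}]^{r/s} satisfies the identity h(r,s) = (1/s) · ∫₀^s min(r,q) · (s - max(r,q)) · Var_q(X) dq, where Var_q(X) = E[X² e^{qX}]/E[e^{qX}] - (E[X e^{qX}]/E[e^{qX}])² is the variance of X with respect to the weighted probability measure P_q(A) = E[χ_A e^{qX}]/E[e^{qX}]. -/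
open MeasureTheory ProbabilityTheory Real Set Filter Topology

variable {Ω : Type} [MeasureSpace Ω] [IsProbabilityMeasure (ℙ : Measure Ω)]


lemma aux_exp_integrable {X : Ω → ℝ} (hX : Measurable X) {q s : ℝ}
    (hq : 0 ≤ q) (hqs : q ≤ s)
    (hint : Integrable (fun ω => Real.exp (s * X ω)) (ℙ : Measure Ω)) :
    Integrable (fun ω => Real.exp (q * X ω)) (ℙ : Measure Ω) := by
  have hb : Integrable (fun ω => 1 + Real.exp (s * X ω)) (ℙ : Measure Ω) :=
    (integrable_const 1).add hint
  refine hb.mono ((measurable_const.mul hX).exp.aestronglyMeasurable) (ae_of_all _ fun ω => ?_)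
  rw [Real.norm_eq_abs, abs_of_pos (Real.exp_pos _), Real.norm_eq_abs]
  have h1 : Real.exp (q * X ω) ≤ 1 + Real.exp (s * X ω) := by
    rcases le_or_gt 0 (X ω) with h | h
    · have : q * X ω ≤ s * X ω := mul_le_mul_of_nonneg_right hqs h
      nlinarith [Real.exp_le_exp.2 this, Real.exp_pos (s * X ω)]
    · have : q * X ω ≤ 0 := mul_nonpos_of_nonneg_of_nonpos hq h.le
      nlinarith [Real.exp_le_one_iff.2 this, Real.exp_pos (s * X ω)]
  calc Real.exp (q * X ω) ≤ 1 + Real.exp (s * X ω) := h1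
    _ ≤ |1 + Real.exp (s * X ω)| := le_abs_self _

lemma aux_pow_exp_le (n : ℕ) {ε : ℝ} (hε : 0 < ε) (x q : ℝ) :
    |x| ^ n * Real.exp (q * x) ≤
      (n.factorial / ε ^ n) * (Real.exp ((q - ε) * x) + Real.exp ((q + ε) * x)) := by
  have h1 : |x| ^ n ≤ (n.factorial / ε ^ n) * Real.exp (ε * |x|) := by
    have h2 : (ε * |x|) ^ n / n.factorial ≤ Real.exp (ε * |x|) := by
      have := Real.sum_le_exp_of_nonneg (mul_nonneg hε.le (abs_nonneg x)) (n + 1)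
      refine le_trans ?_ this
      exact Finset.single_le_sum (f := fun i => (ε * |x|) ^ i / i.factorial)
        (fun i _ => div_nonneg (pow_nonneg (mul_nonneg hε.le (abs_nonneg x)) _)
          (by positivity)) (Finset.self_mem_range_succ n)
    rw [mul_pow] at h2
    have hεn : (0:ℝ) < ε ^ n := pow_pos hε n
    have hfac : (0:ℝ) < n.factorial := Nat.cast_pos.2 n.factorial_pos
    rw [div_mul_eq_mul_div, le_div_iff₀ hεn, mul_comm]
    rw [div_le_iff₀ hfac] at h2
    linarith [h2]
  have h3 : Real.exp (ε * |x|) * Real.exp (q * x) ≤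
      Real.exp ((q - ε) * x) + Real.exp ((q + ε) * x) := by
    rw [← Real.exp_add]
    rcases le_or_gt 0 x with h | h
    · rw [abs_of_nonneg h]
      have : ε * x + q * x = (q + ε) * x := by ring
      rw [this]
      nlinarith [Real.exp_pos ((q - ε) * x)]
    · rw [abs_of_neg h]
      have : ε * -x + q * x = (q - ε) * x := by ring
      rw [this]
      nlinarith [Real.exp_pos ((q + ε) * x)]
  calc |x| ^ n * Real.exp (q * x)
      ≤ ((n.factorial / ε ^ n) * Real.exp (ε * |x|)) * Real.exp (q * x) :=
        mul_le_mul_of_nonneg_right h1 (Real.exp_pos _).le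
    _ = (n.factorial / ε ^ n) * (Real.exp (ε * |x|) * Real.exp (q * x)) := by ring
    _ ≤ _ := by
        refine mul_le_mul_of_nonneg_left h3 (by positivity)

lemma aux_pow_exp_integrable {X : Ω → ℝ} (hX : Measurable X) {s : ℝ}
    (hint : Integrable (fun ω => Real.exp (s * X ω)) (ℙ : Measure Ω))
    (n : ℕ) {q : ℝ} (hq : 0 < q) (hqs : q < s) :
    Integrable (fun ω => |X ω| ^ n * Real.exp (q * X ω)) (ℙ : Measure Ω) := by
  set ε := min q (s - q) / 2 with hε_def
  have hε : 0 < ε := by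
    have := lt_min hq (sub_pos.2 hqs); positivity
  have hq1 : 0 ≤ q - ε := by
    have : ε ≤ q / 2 := by
      rw [hε_def]; gcongr; exact min_le_left _ _
    linarith
  have hq2 : q + ε ≤ s := by
    have : ε ≤ (s - q) / 2 := by
      rw [hε_def]; gcongr; exact min_le_right _ _
    linarith
  have hint1 := aux_exp_integrable hX hq1 (by linarith : q - ε ≤ s) hint
  have hint2 := aux_exp_integrable hX (by linarith : (0:ℝ) ≤ q + ε) hq2 hint
  have hb : Integrable (fun ω => (n.factorial / ε ^ n) *
      (Real.exp ((q - ε) * X ω) + Real.exp ((q + ε) * X ω))) (ℙ : Measure Ω) :=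
    (hint1.add hint2).const_mul _
  refine hb.mono ?_ (ae_of_all _ fun ω => ?_)
  · exact ((hX.abs.pow_const n).mul (measurable_const.mul hX).exp).aestronglyMeasurable
  · rw [Real.norm_eq_abs, abs_of_nonneg (by positivity), Real.norm_eq_abs]
    refine (aux_pow_exp_le n hε (X ω) q).trans (le_abs_self _)

lemma aux_pow_exp_integrable' {X : Ω → ℝ} (hX : Measurable X) {s : ℝ}
    (hint : Integrable (fun ω => Real.exp (s * X ω)) (ℙ : Measure Ω))
    (n : ℕ) {q : ℝ} (hq : 0 < q) (hqs : q < s) :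
    Integrable (fun ω => (X ω) ^ n * Real.exp (q * X ω)) (ℙ : Measure Ω) := by
  refine (aux_pow_exp_integrable hX hint n hq hqs).mono
    (((hX.pow_const n).mul (measurable_const.mul hX).exp).aestronglyMeasurable)
    (ae_of_all _ fun ω => ?_)
  rw [Real.norm_eq_abs, Real.norm_eq_abs, abs_mul, abs_pow, abs_of_nonneg (by positivity :
    (0:ℝ) ≤ |X ω| ^ n * Real.exp (q * X ω)), abs_of_pos (Real.exp_pos _)]

lemma aux_hasDerivAt {X : Ω → ℝ} (hX : Measurable X) {s : ℝ}
    (hint : Integrable (fun ω => Real.exp (s * X ω)) (ℙ : Measure Ω))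
    (n : ℕ) {q : ℝ} (hq : 0 < q) (hqs : q < s) :
    HasDerivAt (fun x => ∫ ω, (X ω) ^ n * Real.exp (x * X ω) ∂(ℙ : Measure Ω))
      (∫ ω, (X ω) ^ (n + 1) * Real.exp (q * X ω) ∂(ℙ : Measure Ω)) q := by
  set ε := min q (s - q) / 2 with hε_def
  have hmin : 0 < min q (s - q) := lt_min hq (sub_pos.2 hqs)
  have hε : 0 < ε := by positivity
  have hq1 : 0 < q - ε := by
    have : ε ≤ q / 2 := by rw [hε_def]; gcongr; exact min_le_left _ _
    linarith
  have hq2 : q + ε < s := by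
    have : ε ≤ (s - q) / 2 := by rw [hε_def]; gcongr; exact min_le_right _ _
    linarith
  have hint1 := aux_pow_exp_integrable hX hint (n + 1) hq1 (by linarith)
  have hint2 := aux_pow_exp_integrable hX hint (n + 1) (by linarith : (0:ℝ) < q + ε) hq2
  have key := hasDerivAt_integral_of_dominated_loc_of_deriv_le (μ := (ℙ : Measure Ω))
    (F := fun x ω => (X ω) ^ n * Real.exp (x * X ω))
    (F' := fun x ω => (X ω) ^ (n + 1) * Real.exp (x * X ω))
    (bound := fun ω => |X ω| ^ (n + 1) * Real.exp ((q - ε) * X ω)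
      + |X ω| ^ (n + 1) * Real.exp ((q + ε) * X ω))
    (Metric.ball_mem_nhds q hε)
    (Filter.Eventually.of_forall fun x =>
      (((hX.pow_const n).mul (measurable_const.mul hX).exp).aestronglyMeasurable))
    (aux_pow_exp_integrable' hX hint n hq hqs)
    (((hX.pow_const (n+1)).mul (measurable_const.mul hX).exp).aestronglyMeasurable)
    (ae_of_all _ fun ω x hx => ?_)
    (hint1.add hint2)
    (ae_of_all _ fun ω x hx => ?_)
  · exact key.2
  · -- bound
    rw [Real.norm_eq_abs, abs_mul, abs_pow, abs_of_pos (Real.exp_pos _)]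
    have hxq : |x - q| < ε := by
      rwa [Metric.mem_ball, Real.dist_eq] at hx
    have h1 : Real.exp (x * X ω) ≤ Real.exp ((q - ε) * X ω) + Real.exp ((q + ε) * X ω) := by
      rcases le_or_gt 0 (X ω) with h | h
      · have : x * X ω ≤ (q + ε) * X ω := by nlinarith [abs_lt.1 hxq]
        nlinarith [Real.exp_le_exp.2 this, Real.exp_pos ((q - ε) * X ω)]
      · have : x * X ω ≤ (q - ε) * X ω := by nlinarith [abs_lt.1 hxq]
        nlinarith [Real.exp_le_exp.2 this, Real.exp_pos ((q + ε) * X ω)]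
    calc |X ω| ^ (n+1) * Real.exp (x * X ω)
        ≤ |X ω| ^ (n+1) * (Real.exp ((q - ε) * X ω) + Real.exp ((q + ε) * X ω)) := by
          exact mul_le_mul_of_nonneg_left h1 (by positivity)
      _ = _ := by ring
  · -- differentiability
    have h := (((hasDerivAt_id x).mul_const (X ω)).exp).const_mul ((X ω) ^ n)
    refine h.congr_deriv ?_
    simp only [id_eq, one_mul, pow_succ]
    ring

lemma aux_continuousOn {X : Ω → ℝ} (hX : Measurable X) {s : ℝ} (hs : 0 < s)
    (hint : Integrable (fun ω => Real.exp (s * X ω)) (ℙ : Measure Ω)) :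
    ContinuousOn (fun x => ∫ ω, Real.exp (x * X ω) ∂(ℙ : Measure Ω)) (Icc 0 s) := by
  refine continuousOn_of_dominated
    (fun x _ => (measurable_const.mul hX).exp.aestronglyMeasurable)
    (fun x hx => ae_of_all _ fun ω => ?_)
    ((integrable_const 1).add hint)
    (ae_of_all _ fun ω => Continuous.continuousOn (by continuity))
  rw [Real.norm_eq_abs, abs_of_pos (Real.exp_pos _)]
  rcases le_or_gt 0 (X ω) with h | h
  · have : x * X ω ≤ s * X ω := mul_le_mul_of_nonneg_right hx.2 h
    simp only [Pi.add_apply]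
    nlinarith [Real.exp_le_exp.2 this]
  · have : x * X ω ≤ 0 := mul_nonpos_of_nonneg_of_nonpos hx.1 h.le
    simp only [Pi.add_apply]
    nlinarith [Real.exp_le_one_iff.2 this, Real.exp_pos (s * X ω)]

lemma aux_green_left (f L g : ℝ → ℝ) {r s : ℝ} (hr : 0 < r) (hrs : r < s)
    (hfc : ContinuousOn f (Icc 0 s)) (hf0 : f 0 = 0)
    (hfd : ∀ t ∈ Ioo 0 s, HasDerivAt f (L t) t)
    (hLd : ∀ t ∈ Ioo 0 s, HasDerivAt L (g t) t)
    (hgc : ContinuousOn g (Ioo 0 s))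
    (hg0 : ∀ t ∈ Ioo 0 s, 0 ≤ g t) :
    IntegrableOn (fun t => t * g t) (Ioc 0 r) ∧
      ∫ t in Ioc 0 r, t * g t = r * L r - f r := by
  have hs : 0 < s := hr.trans hrs
  -- monotonicity of L
  have hmono : MonotoneOn L (Ioo 0 s) := by
    apply monotoneOn_of_deriv_nonneg (convex_Ioo 0 s)
      (fun t ht => ((hLd t ht).differentiableAt).continuousAt.continuousWithinAt)
    · rw [interior_Ioo]
      exact fun t ht => ((hLd t ht).differentiableAt).differentiableWithinAt
    · intro t ht; rw [interior_Ioo] at ht; rw [(hLd t ht).deriv]; exact hg0 t ht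
  -- mean value theorem slopes
  have hslope : ∀ a b : ℝ, 0 < a → a < b → b < s →
      ∃ c ∈ Ioo a b, L c = (f b - f a) / (b - a) := by
    intro a b ha hab hbs
    exact exists_hasDerivAt_eq_slope f L hab
      (hfc.mono (Icc_subset_Icc (by linarith) (by linarith)))
      (fun x hx => hfd x ⟨by linarith [hx.1], by linarith [hx.2]⟩)
  -- continuity of f at 0
  have hf_cont0 : Tendsto f (𝓝[Icc 0 s] 0) (𝓝 0) := by
    have h := hfc 0 ⟨le_refl 0, hs.le⟩
    rwa [ContinuousWithinAt, hf0] at h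
  -- scaled limits
  have hmap : ∀ c : ℝ, 0 < c → Tendsto (fun a => f (c * a)) (𝓝[>] (0:ℝ)) (𝓝 0) := by
    intro c hc
    apply hf_cont0.comp
    refine tendsto_nhdsWithin_of_tendsto_nhds_of_eventually_within _ ?_ ?_
    · have h : Tendsto (fun a : ℝ => c * a) (𝓝 0) (𝓝 (c * 0)) :=
        (continuous_const.mul continuous_id).tendsto 0
      rw [mul_zero] at h
      exact h.mono_left nhdsWithin_le_nhds
    · filter_upwards [Ioo_mem_nhdsGT (show (0:ℝ) < s / c by positivity)] with a ha
      refine ⟨(mul_pos hc ha.1).le, ?_⟩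
      rw [← le_div_iff₀' hc]; exact ha.2.le
  have hmap1 : Tendsto f (𝓝[>] (0:ℝ)) (𝓝 0) := by
    have := hmap 1 one_pos; simpa using this
  have hu : Tendsto (fun a => f (2 * a) - f a) (𝓝[>] (0:ℝ)) (𝓝 0) := by
    have := (hmap 2 two_pos).sub hmap1; simpa using this
  have hv : Tendsto (fun a => 2 * (f a - f (2⁻¹ * a))) (𝓝[>] (0:ℝ)) (𝓝 0) := by
    have := (hmap1.sub (hmap 2⁻¹ (by norm_num))).const_mul 2; simpa using this
  -- squeeze bounds
  have hub : ∀ᶠ a in 𝓝[>] (0:ℝ), a * L a ≤ f (2 * a) - f a := by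
    filter_upwards [Ioo_mem_nhdsGT (half_pos hs)] with a ha
    obtain ⟨c, hc, hcL⟩ := hslope a (2 * a) ha.1 (by linarith [ha.1]) (by linarith [ha.2])
    have haI : a ∈ Ioo 0 s := ⟨ha.1, by linarith [ha.2]⟩
    have hcI : c ∈ Ioo 0 s := ⟨by linarith [hc.1, ha.1], by linarith [hc.2, ha.2]⟩
    have hLac : L a ≤ L c := hmono haI hcI hc.1.le
    have h2 : a * L c = f (2 * a) - f a := by
      rw [hcL, show 2 * a - a = a by ring, mul_comm, div_mul_cancel₀ _ ha.1.ne']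
    nlinarith [ha.1]
  have hlb : ∀ᶠ a in 𝓝[>] (0:ℝ), 2 * (f a - f (2⁻¹ * a)) ≤ a * L a := by
    filter_upwards [Ioo_mem_nhdsGT hs] with a ha
    obtain ⟨c, hc, hcL⟩ := hslope (2⁻¹ * a) a (by linarith [ha.1]) (by linarith [ha.1])
      (by linarith [ha.2])
    have haI : a ∈ Ioo 0 s := ha
    have hcI : c ∈ Ioo 0 s := ⟨by linarith [hc.1, ha.1], by linarith [hc.2, ha.2]⟩
    have hLca : L c ≤ L a := hmono hcI haI hc.2.le
    have h2 : a * L c = 2 * (f a - f (2⁻¹ * a)) := by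
      rw [hcL, show a - 2⁻¹ * a = 2⁻¹ * a by ring]
      have ha' : a ≠ 0 := ha.1.ne'
      field_simp
    nlinarith [ha.1]
  have hlim0 : Tendsto (fun a => a * L a) (𝓝[>] (0:ℝ)) (𝓝 0) :=
    tendsto_of_tendsto_of_tendsto_of_le_of_le' hv hu hlb hub
  -- the antiderivative
  set Fl : ℝ → ℝ := fun t => t * L t - f t with hFl_def
  have hFld : ∀ t ∈ Ioo 0 s, HasDerivAt Fl (t * g t) t := by
    intro t ht
    have h := ((hasDerivAt_id t).mul (hLd t ht)).sub (hfd t ht)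
    refine h.congr_deriv ?_
    simp only [id_eq, one_mul]
    ring
  have hFl_lim : Tendsto Fl (𝓝[>] (0:ℝ)) (𝓝 0) := by
    have := hlim0.sub hmap1; simpa using this
  -- FTC on [a, r]
  have hFTC : ∀ a ∈ Ioo 0 r, ∫ t in Ioc a r, t * g t = Fl r - Fl a := by
    intro a ha
    have hsub : uIcc a r ⊆ Ioo 0 s := by
      rw [uIcc_of_le ha.2.le]
      exact fun x hx => ⟨lt_of_lt_of_le ha.1 hx.1, lt_of_le_of_lt hx.2 hrs⟩
    have h1 : ∀ t ∈ uIcc a r, HasDerivAt Fl (t * g t) t := fun t ht => hFld t (hsub ht)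
    have h2 : IntervalIntegrable (fun t => t * g t) volume a r :=
      (continuousOn_id.mul (hgc.mono hsub)).intervalIntegrable
    have h3 := intervalIntegral.integral_eq_sub_of_hasDerivAt h1 h2
    rw [← intervalIntegral.integral_of_le ha.2.le]
    exact h3
  -- sequence tending to 0 from the right
  set aseq : ℕ → ℝ := fun n => r / (n + 2) with haseq_def
  have haseq_mem : ∀ n, aseq n ∈ Ioo 0 r := by
    intro n
    have hn2 : (1:ℝ) < (n:ℝ) + 2 := by
      have : (0:ℝ) ≤ (n:ℝ) := Nat.cast_nonneg n
      linarith
    exact ⟨by positivity, div_lt_self hr hn2⟩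
  have haseq_tendsto : Tendsto aseq atTop (𝓝[>] (0:ℝ)) := by
    apply tendsto_nhdsWithin_of_tendsto_nhds_of_eventually_within
    · apply Tendsto.div_atTop tendsto_const_nhds
      exact tendsto_atTop_add_const_right _ 2 tendsto_natCast_atTop_atTop
    · exact Eventually.of_forall fun n => (haseq_mem n).1
  -- AECover
  have hcover : AECover (volume.restrict (Ioc (0:ℝ) r)) atTop (fun n => Ioc (aseq n) r) := by
    refine ⟨?_, fun n => measurableSet_Ioc⟩
    filter_upwards [ae_restrict_mem measurableSet_Ioc] with x hx
    have hx1 : Iio x ∈ 𝓝[>] (0:ℝ) := nhdsWithin_le_nhds (Iio_mem_nhds hx.1)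
    filter_upwards [haseq_tendsto.eventually hx1] with n hn
    exact ⟨hn, hx.2⟩
  have hfi : ∀ n, IntegrableOn (fun t => t * g t) (Ioc (aseq n) r)
      (volume.restrict (Ioc (0:ℝ) r)) := by
    intro n
    have hsub : Icc (aseq n) r ⊆ Ioo 0 s := fun x hx =>
      ⟨lt_of_lt_of_le (haseq_mem n).1 hx.1, lt_of_le_of_lt hx.2 hrs⟩
    have hcont : IntegrableOn (fun t => t * g t) (Ioc (aseq n) r) volume :=
      (((continuousOn_id.mul (hgc.mono hsub)).integrableOn_compact isCompact_Icc).mono_set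
        Ioc_subset_Icc_self)
    rw [IntegrableOn, Measure.restrict_restrict measurableSet_Ioc]
    exact hcont.mono_set inter_subset_left
  have hnn : ∀ᵐ x ∂(volume.restrict (Ioc (0:ℝ) r)), 0 ≤ x * g x := by
    filter_upwards [ae_restrict_mem measurableSet_Ioc] with x hx
    exact mul_nonneg hx.1.le (hg0 x ⟨hx.1, lt_of_le_of_lt hx.2 hrs⟩)
  have hInt_eq : ∀ n, ∫ x in Ioc (aseq n) r, x * g x ∂(volume.restrict (Ioc (0:ℝ) r))
      = Fl r - Fl (aseq n) := by
    intro n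
    rw [Measure.restrict_restrict measurableSet_Ioc,
      inter_eq_left.2 (Ioc_subset_Ioc_left (haseq_mem n).1.le)]
    exact hFTC _ (haseq_mem n)
  have hTend : Tendsto (fun n => ∫ x in Ioc (aseq n) r, x * g x
      ∂(volume.restrict (Ioc (0:ℝ) r))) atTop (𝓝 (Fl r)) := by
    simp_rw [hInt_eq]
    have h := tendsto_const_nhds (x := Fl r) (f := atTop (α := ℕ))
    have h2 : Tendsto (fun n => Fl (aseq n)) atTop (𝓝 0) := hFl_lim.comp haseq_tendsto
    simpa using h.sub h2
  have hint_total : Integrable (fun t => t * g t) (volume.restrict (Ioc (0:ℝ) r)) :=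
    hcover.integrable_of_integral_tendsto_of_nonneg_ae (Fl r) hfi hnn hTend
  refine ⟨hint_total, ?_⟩
  have h := hcover.integral_tendsto_of_countably_generated hint_total
  have heq := tendsto_nhds_unique h hTend
  rw [heq]

lemma aux_green_right (f L g : ℝ → ℝ) {r s : ℝ} (hr : 0 < r) (hrs : r < s)
    (hfc : ContinuousOn f (Icc 0 s)) (hf0 : f 0 = 0)
    (hfd : ∀ t ∈ Ioo 0 s, HasDerivAt f (L t) t)
    (hLd : ∀ t ∈ Ioo 0 s, HasDerivAt L (g t) t)
    (hgc : ContinuousOn g (Ioo 0 s))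
    (hg0 : ∀ t ∈ Ioo 0 s, 0 ≤ g t) :
    IntegrableOn (fun t => (s - t) * g t) (Ioc r s) ∧
      ∫ t in Ioc r s, (s - t) * g t = f s - (s - r) * L r - f r := by
  have hs : 0 < s := hr.trans hrs
  have hmaps : MapsTo (fun t : ℝ => s - t) (Icc 0 s) (Icc 0 s) := by
    intro t ht
    simp only [mem_Icc] at ht ⊢
    constructor <;> linarith [ht.1, ht.2]
  have hmapsIoo : ∀ t ∈ Ioo 0 s, s - t ∈ Ioo (0:ℝ) s := fun t ht =>
    ⟨by linarith [ht.2], by linarith [ht.1]⟩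
  have hcont_st : ContinuousOn (fun t : ℝ => s - t) (Icc 0 s) :=
    (continuous_const.sub continuous_id).continuousOn
  have key := aux_green_left (fun t => f (s - t) - f s) (fun t => -L (s - t))
    (fun t => g (s - t)) (r := s - r) (s := s) (by linarith) (by linarith)
    (((hfc.comp hcont_st hmaps).sub continuousOn_const))
    (by simp)
    (fun t ht => by
      have h := ((hfd (s - t) (hmapsIoo t ht)).comp t
        ((hasDerivAt_const t s).sub (hasDerivAt_id t))).sub_const (f s)
      refine h.congr_deriv ?_
      simp)
    (fun t ht => by
      have h := (((hLd (s - t) (hmapsIoo t ht)).comp t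
        ((hasDerivAt_const t s).sub (hasDerivAt_id t)))).neg
      refine h.congr_deriv ?_
      simp)
    (hgc.comp ((continuous_const.sub continuous_id).continuousOn) fun t ht => hmapsIoo t ht)
    (fun t ht => hg0 _ (hmapsIoo t ht))
  obtain ⟨hint, heq⟩ := key
  constructor
  · -- transfer integrability by reflection
    have h1 : IntervalIntegrable (fun t => t * g (s - t)) volume 0 (s - r) := by
      rw [intervalIntegrable_iff_integrableOn_Ioc_of_le (by linarith)]
      exact hint
    have h2 := h1.comp_sub_left s
    rw [show s - 0 = s by ring, show s - (s - r) = r by ring] at h2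
    replace h2 := h2.symm
    rw [intervalIntegrable_iff_integrableOn_Ioc_of_le hrs.le] at h2
    refine IntegrableOn.congr_fun h2 (fun t ht => ?_) measurableSet_Ioc
    simp [sub_sub_cancel]
  · have h3 : ∫ t in Ioc r s, (s - t) * g t
        = ∫ t in r..s, (fun u => u * g (s - u)) (s - t) := by
      rw [intervalIntegral.integral_of_le hrs.le]
      apply setIntegral_congr_fun measurableSet_Ioc
      intro t ht
      simp [sub_sub_cancel]
    rw [h3, intervalIntegral.integral_comp_sub_left (fun u => u * g (s - u)) s,
      show s - s = (0:ℝ) by ring, intervalIntegral.integral_of_le (by linarith : (0:ℝ) ≤ s - r)]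
    rw [heq]
    simp only [sub_sub_cancel]
    ring

lemma aux_green (f L g : ℝ → ℝ) {r s : ℝ} (hr : 0 < r) (hrs : r < s)
    (hfc : ContinuousOn f (Icc 0 s)) (hf0 : f 0 = 0)
    (hfd : ∀ t ∈ Ioo 0 s, HasDerivAt f (L t) t)
    (hLd : ∀ t ∈ Ioo 0 s, HasDerivAt L (g t) t)
    (hgc : ContinuousOn g (Ioo 0 s))
    (hg0 : ∀ t ∈ Ioo 0 s, 0 ≤ g t) :
    ∫ q in (0:ℝ)..s, min r q * (s - max r q) * g q = r * f s - s * f r := by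
  have hs : 0 < s := hr.trans hrs
  obtain ⟨hil, hel⟩ := aux_green_left f L g hr hrs hfc hf0 hfd hLd hgc hg0
  obtain ⟨hir, her⟩ := aux_green_right f L g hr hrs hfc hf0 hfd hLd hgc hg0
  have hEqL : EqOn (fun q => min r q * (s - max r q) * g q)
      (fun q => (s - r) * (q * g q)) (Ioc 0 r) := by
    intro q hq
    simp only
    rw [min_eq_right hq.2, max_eq_left hq.2]
    ring
  have hEqR : EqOn (fun q => min r q * (s - max r q) * g q)
      (fun q => r * ((s - q) * g q)) (Ioc r s) := by
    intro q hq
    simp only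
    rw [min_eq_left hq.1.le, max_eq_right hq.1.le]
    ring
  have hiL : IntegrableOn (fun q => min r q * (s - max r q) * g q) (Ioc 0 r) :=
    IntegrableOn.congr_fun (hil.const_mul (s - r)) (fun q hq => (hEqL hq).symm) measurableSet_Ioc
  have hiR : IntegrableOn (fun q => min r q * (s - max r q) * g q) (Ioc r s) :=
    IntegrableOn.congr_fun (hir.const_mul r) (fun q hq => (hEqR hq).symm) measurableSet_Ioc
  rw [intervalIntegral.integral_of_le hs.le,
    ← Ioc_union_Ioc_eq_Ioc hr.le hrs.le,
    setIntegral_union (Ioc_disjoint_Ioc_of_le le_rfl) measurableSet_Ioc hiL hiR,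
    setIntegral_congr_fun measurableSet_Ioc hEqL,
    setIntegral_congr_fun measurableSet_Ioc hEqR,
    integral_const_mul, integral_const_mul, hel, her]
  ring

/-- if `E[e^{sX}] < ∞` and `0 < r < s`, then `E[e^{rX}] < ∞` and the
defect `h(r,s)` in Hölder's inequality, defined by
`E[e^{rX}] = e^{-h(r,s)} E[e^{sX}]^{r/s}`, equals
`(1/s) ∫₀^s min(r,q)(s - max(r,q)) Var_q(X) dq`, where `Var_q(X)` is the variance of
`X` under the measure weighted by `e^{qX}`. -/
theorem holder_defect_identity
    (Ω : Type) [MeasureSpace Ω] [IsProbabilityMeasure (ℙ : Measure Ω)]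
    (X : Ω → ℝ) (hX : Measurable X)
    (r s : ℝ) (hr : 0 < r) (hrs : r < s)
    (hint : Integrable (fun ω => Real.exp (s * X ω)) (ℙ : Measure Ω)) :
    Integrable (fun ω => Real.exp (r * X ω)) (ℙ : Measure Ω) ∧
    (r / s) * Real.log (∫ ω, Real.exp (s * X ω) ∂(ℙ : Measure Ω))
        - Real.log (∫ ω, Real.exp (r * X ω) ∂(ℙ : Measure Ω))
      = (1 / s) * ∫ q in (0 : ℝ)..s,
          min r q * (s - max r q) *
            ((∫ ω, (X ω) ^ 2 * Real.exp (q * X ω) ∂(ℙ : Measure Ω))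
                / (∫ ω, Real.exp (q * X ω) ∂(ℙ : Measure Ω))
              - ((∫ ω, X ω * Real.exp (q * X ω) ∂(ℙ : Measure Ω))
                / (∫ ω, Real.exp (q * X ω) ∂(ℙ : Measure Ω))) ^ 2) := by
  have hs : 0 < s := hr.trans hrs
  refine ⟨aux_exp_integrable hX hr.le hrs.le hint, ?_⟩
  set M : ℝ → ℝ := fun q => ∫ ω, Real.exp (q * X ω) ∂(ℙ : Measure Ω) with hM_def
  set M1 : ℝ → ℝ := fun q => ∫ ω, X ω * Real.exp (q * X ω) ∂(ℙ : Measure Ω) with hM1_def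
  set M2 : ℝ → ℝ := fun q => ∫ ω, (X ω) ^ 2 * Real.exp (q * X ω) ∂(ℙ : Measure Ω) with hM2_def
  set g : ℝ → ℝ := fun q => M2 q / M q - (M1 q / M q) ^ 2 with hg_def
  set f : ℝ → ℝ := fun q => Real.log (M q) with hf_def
  set L : ℝ → ℝ := fun q => M1 q / M q with hL_def
  -- positivity of M
  have hMpos : ∀ q ∈ Icc (0:ℝ) s, 0 < M q := by
    intro q hq
    exact mgf_pos (aux_exp_integrable hX hq.1 hq.2 hint)
  -- derivatives
  have hM_deriv : ∀ q ∈ Ioo (0:ℝ) s, HasDerivAt M (M1 q) q := by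
    intro q hq
    have h := aux_hasDerivAt hX hint 0 hq.1 hq.2
    simpa only [zero_add, pow_zero, one_mul, pow_one] using h
  have hM1_deriv : ∀ q ∈ Ioo (0:ℝ) s, HasDerivAt M1 (M2 q) q := by
    intro q hq
    have h := aux_hasDerivAt hX hint 1 hq.1 hq.2
    simpa only [Nat.reduceAdd, pow_one] using h
  have hM2_deriv : ∀ q ∈ Ioo (0:ℝ) s,
      HasDerivAt M2 (∫ ω, (X ω) ^ 3 * Real.exp (q * X ω) ∂(ℙ : Measure Ω)) q := by
    intro q hq
    have h := aux_hasDerivAt hX hint 2 hq.1 hq.2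
    simpa only [Nat.reduceAdd] using h
  have hIoosub : Ioo (0:ℝ) s ⊆ Icc 0 s := Ioo_subset_Icc_self
  have hMne : ∀ q ∈ Ioo (0:ℝ) s, M q ≠ 0 := fun q hq => (hMpos q (hIoosub hq)).ne'
  have hf_deriv : ∀ q ∈ Ioo (0:ℝ) s, HasDerivAt f (L q) q := by
    intro q hq
    exact (hM_deriv q hq).log (hMne q hq)
  have hL_deriv : ∀ q ∈ Ioo (0:ℝ) s, HasDerivAt L (g q) q := by
    intro q hq
    have h := (hM1_deriv q hq).div (hM_deriv q hq) (hMne q hq)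
    refine h.congr_deriv ?_
    have h0 : M q ≠ 0 := hMne q hq
    rw [hg_def]
    field_simp
  -- continuity of f on [0, s]
  have hfc : ContinuousOn f (Icc 0 s) :=
    (aux_continuousOn hX hs hint).log (fun q hq => (hMpos q hq).ne')
  have hf0 : f 0 = 0 := by
    have hM0 : M 0 = 1 := by simp [hM_def]
    rw [hf_def]; simp [hM0]
  -- continuity of g on (0, s)
  have hgc : ContinuousOn g (Ioo 0 s) := by
    have hcM : ContinuousOn M (Ioo 0 s) := fun q hq =>
      (hM_deriv q hq).differentiableAt.continuousAt.continuousWithinAt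
    have hcM1 : ContinuousOn M1 (Ioo 0 s) := fun q hq =>
      (hM1_deriv q hq).differentiableAt.continuousAt.continuousWithinAt
    have hcM2 : ContinuousOn M2 (Ioo 0 s) := fun q hq =>
      (hM2_deriv q hq).differentiableAt.continuousAt.continuousWithinAt
    exact (hcM2.div hcM hMne).sub ((hcM1.div hcM hMne).pow 2)
  -- nonnegativity of g (variance)
  have hg0 : ∀ q ∈ Ioo (0:ℝ) s, 0 ≤ g q := by
    intro q hq
    obtain ⟨c, hc_def⟩ : ∃ c : ℝ, c = M1 q / M q := ⟨_, rfl⟩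
    have hMi : Integrable (fun ω => Real.exp (q * X ω)) (ℙ : Measure Ω) :=
      aux_exp_integrable hX hq.1.le (hIoosub hq).2 hint
    have hM1i : Integrable (fun ω => X ω * Real.exp (q * X ω)) (ℙ : Measure Ω) := by
      have h := aux_pow_exp_integrable' hX hint 1 hq.1 hq.2
      simpa only [pow_one] using h
    have hM2i : Integrable (fun ω => (X ω) ^ 2 * Real.exp (q * X ω)) (ℙ : Measure Ω) :=
      aux_pow_exp_integrable' hX hint 2 hq.1 hq.2
    have hnn : 0 ≤ ∫ ω, (X ω - c) ^ 2 * Real.exp (q * X ω) ∂(ℙ : Measure Ω) :=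
      integral_nonneg fun ω => by positivity
    have hexp : ∫ ω, (X ω - c) ^ 2 * Real.exp (q * X ω) ∂(ℙ : Measure Ω)
        = M2 q - 2 * c * M1 q + c ^ 2 * M q := by
      have heq : (fun ω => (X ω - c) ^ 2 * Real.exp (q * X ω))
          = fun ω => ((X ω) ^ 2 * Real.exp (q * X ω)
            - 2 * c * (X ω * Real.exp (q * X ω)))
            + c ^ 2 * Real.exp (q * X ω) := by
        funext ω; ring
      have hAB : Integrable (fun ω => (X ω) ^ 2 * Real.exp (q * X ω)
          - 2 * c * (X ω * Real.exp (q * X ω))) (ℙ : Measure Ω) :=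
        hM2i.sub (hM1i.const_mul (2 * c))
      rw [heq, integral_add hAB (hMi.const_mul (c ^ 2)),
        integral_sub hM2i (hM1i.const_mul (2 * c)), integral_const_mul, integral_const_mul]
    have hgq : g q = (M2 q - 2 * c * M1 q + c ^ 2 * M q) / M q := by
      have h0 : M q ≠ 0 := hMne q hq
      rw [hg_def, hc_def]
      field_simp
      ring
    rw [hgq]
    exact div_nonneg (by rw [← hexp]; exact hnn) (hMpos q (hIoosub hq)).le
  have hgreen := aux_green f L g hr hrs hfc hf0 hf_deriv hL_deriv hgc hg0
  rw [hgreen]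
  have hsne : s ≠ 0 := hs.ne'
  simp only [hf_def]
  field_simp
  rfl
end

section
/- Equality case in the Hölder inequality for exponential moments: let X be a real random variable with E[e^{sX}] < ∞ for some s > 0, and let r ∈ (0, s). If E[e^{rX}] = E[e^{sX}]^{r/s}, then X is almost surely equal to a constant. -/
open MeasureTheory ProbabilityTheory

/-- equality case in Hölder's inequality for exponential moments.
If `E[e^{sX}] < ∞`, `0 < r < s`, and `E[e^{rX}] = E[e^{sX}]^{r/s}`, then `X` is almost
surely constant. -/
theorem holder_equality_case_constant
    (Ω : Type) [MeasureSpace Ω] [IsProbabilityMeasure (ℙ : Measure Ω)]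
    (X : Ω → ℝ) (hX : Measurable X)
    (r s : ℝ) (hr : 0 < r) (hrs : r < s)
    (hint : Integrable (fun ω => Real.exp (s * X ω)) (ℙ : Measure Ω))
    (heq : ∫ ω, Real.exp (r * X ω) ∂(ℙ : Measure Ω)
        = (∫ ω, Real.exp (s * X ω) ∂(ℙ : Measure Ω)) ^ (r / s)) :
    ∃ c : ℝ, ∀ᵐ ω ∂(ℙ : Measure Ω), X ω = c := by
  have hs : 0 < s := hr.trans hrs
  have hp0 : 0 < r / s := div_pos hr hs
  have hp1 : r / s < 1 := (div_lt_one hs).mpr hrs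
  set g : ℝ → ℝ := fun t => t ^ (r / s) with hg
  have hgf : ∀ ω, g (Real.exp (s * X ω)) = Real.exp (r * X ω) := by
    intro ω
    show Real.exp (s * X ω) ^ (r / s) = _
    rw [← Real.exp_mul]
    congr 1
    field_simp
  have hgi : Integrable (g ∘ fun ω => Real.exp (s * X ω)) (ℙ : Measure Ω) := by
    have : (g ∘ fun ω => Real.exp (s * X ω)) = fun ω => Real.exp (r * X ω) :=
      funext fun ω => hgf ω
    rw [this]
    apply Integrable.mono' (hint.add (integrable_const 1))
    · exact (Real.measurable_exp.comp (measurable_const.mul hX)).aestronglyMeasurable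
    · filter_upwards with ω
      rw [Real.norm_eq_abs, abs_of_pos (Real.exp_pos _)]
      simp only [Pi.add_apply]
      rcases le_or_gt (X ω) 0 with h | h
      · have : Real.exp (r * X ω) ≤ 1 := Real.exp_le_one_iff.mpr (by nlinarith)
        nlinarith [Real.exp_pos (s * X ω)]
      · have : Real.exp (r * X ω) ≤ Real.exp (s * X ω) :=
          Real.exp_le_exp.mpr (by nlinarith)
        linarith
  have hconc := (Real.strictConcaveOn_rpow hp0 hp1).ae_eq_const_or_lt_map_average
    (s := Set.Ici 0) (f := fun ω => Real.exp (s * X ω)) (μ := (ℙ : Measure Ω))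
    ((Real.continuous_rpow_const hp0.le).continuousOn)
    isClosed_Ici
    (Filter.Eventually.of_forall fun ω => (Real.exp_pos _).le)
    hint hgi
  have havg : ∀ (f : Ω → ℝ), (⨍ ω, f ω ∂(ℙ : Measure Ω)) = ∫ ω, f ω ∂(ℙ : Measure Ω) := by
    intro f
    rw [average_eq]
    simp
  rcases hconc with h | h
  · -- exp(sX) is a.e. constant
    set c := ⨍ ω, Real.exp (s * X ω) ∂(ℙ : Measure Ω) with hc
    refine ⟨Real.log c / s, ?_⟩
    filter_upwards [h] with ω hω
    have : Real.exp (s * X ω) = c := hω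
    have := congrArg Real.log this
    rw [Real.log_exp] at this
    field_simp
    linarith
  · -- contradiction with heq
    exfalso
    rw [havg, havg] at h
    have heq2 : (∫ ω, Real.exp (s * X ω) ^ (r / s) ∂(ℙ : Measure Ω))
        = ∫ ω, Real.exp (r * X ω) ∂(ℙ : Measure Ω) := by
      apply integral_congr_ae
      filter_upwards with ω
      exact hgf ω
    rw [heq2, heq] at h
    exact lt_irrefl _ h
end

section
/- Product formula for tridiagonal resolvents: let X be an N×N complex tridiagonal Hermitian matrix with real diagonal entries v_1,…,v_N and complex entries t_k in position (k,k+1) (and conj(t_k) in position (k+1,k)). Let λ ∈ ℝ be such that λ is not an eigenvalue of X nor of any of the top-left principal submatrices X_k for i ≤ k ≤ j-1, where 1 ≤ i < j ≤ N. Then g_N(i,j) = (-1)^{j-i} · ( ∏_{k=i}^{j-1} g_k(k,k) · t_k ) · g_N(j,j), where g_k(a,b) = ⟨e_a, (X_k - λ)⁻¹ e_b⟩ and g_N(a,b) = ⟨e_a, (X - λ)⁻¹ e_b⟩. -/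
open MeasureTheory Matrix

/-- The `N × N` tridiagonal Hermitian matrix with diagonal entries `v 0, …, v (N-1)`,
entries `t k` in position `(k, k+1)` and `conj (t k)` in position `(k+1, k)`.
For `k ≤ N`, `triMatrix k v t` is the top-left `k × k` principal submatrix of
`triMatrix N v t`. -/
noncomputable def triMatrix (N : ℕ) (v : ℕ → ℝ) (t : ℕ → ℂ) :
    Matrix (Fin N) (Fin N) ℂ := fun i j =>
  if (i : ℕ) = j then (v i : ℂ)
  else if (i : ℕ) + 1 = j then t i
  else if (j : ℕ) + 1 = i then (starRingEnd ℂ) (t j)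
  else 0


theorem tri_step
    (N : ℕ) (v : ℕ → ℝ) (t : ℕ → ℂ) (lam : ℝ)
    (i j : ℕ) (hij : i < j) (hjN : j < N)
    (hfull : IsUnit (triMatrix N v t - (lam : ℂ) • (1 : Matrix (Fin N) (Fin N) ℂ)))
    (hB : IsUnit (triMatrix (i + 1) v t - (lam : ℂ) • (1 : Matrix (Fin (i+1)) (Fin (i+1)) ℂ))) :
    (triMatrix N v t - (lam : ℂ) • (1 : Matrix (Fin N) (Fin N) ℂ))⁻¹
        ⟨i, lt_trans hij hjN⟩ ⟨j, hjN⟩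
      = -((triMatrix (i + 1) v t - (lam : ℂ) • (1 : Matrix (Fin (i+1)) (Fin (i+1)) ℂ))⁻¹
            (Fin.last i) (Fin.last i) * t i *
          (triMatrix N v t - (lam : ℂ) • (1 : Matrix (Fin N) (Fin N) ℂ))⁻¹
            ⟨i + 1, by omega⟩ ⟨j, hjN⟩) := by
  set A := triMatrix N v t - (lam : ℂ) • (1 : Matrix (Fin N) (Fin N) ℂ) with hA
  set B := triMatrix (i + 1) v t - (lam : ℂ) • (1 : Matrix (Fin (i+1)) (Fin (i+1)) ℂ) with hBdef
  have hiN : i < N := lt_trans hij hjN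
  have hi1N : i + 1 < N := by omega
  set G := A⁻¹ with hG
  have hdetA : IsUnit A.det := (Matrix.isUnit_iff_isUnit_det A).mp hfull
  have hdetB : IsUnit B.det := (Matrix.isUnit_iff_isUnit_det B).mp hB
  have hAG : A * G = 1 := Matrix.mul_nonsing_inv A hdetA
  set j' : Fin N := ⟨j, hjN⟩ with hj'
  -- entries of A
  have hAentry : ∀ (a b : Fin N), A a b =
      (if (a : ℕ) = b then (v a : ℂ) - lam
       else if (a : ℕ) + 1 = b then t a
       else if (b : ℕ) + 1 = a then (starRingEnd ℂ) (t b)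
       else 0) := by
    intro a b
    simp only [hA, Matrix.sub_apply, Matrix.smul_apply, Matrix.one_apply, triMatrix,
      Fin.ext_iff]
    by_cases h : (a : ℕ) = b <;> simp [h]
  have hBentry : ∀ (a b : Fin (i+1)), B a b =
      (if (a : ℕ) = b then (v a : ℂ) - lam
       else if (a : ℕ) + 1 = b then t a
       else if (b : ℕ) + 1 = a then (starRingEnd ℂ) (t b)
       else 0) := by
    intro a b
    simp only [hBdef, Matrix.sub_apply, Matrix.smul_apply, Matrix.one_apply, triMatrix,
      Fin.ext_iff]
    by_cases h : (a : ℕ) = b <;> simp [h]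
  -- the vector of resolvent entries
  set w : Fin (i+1) → ℂ := fun a => G ⟨a, by omega⟩ j' with hw
  set r : Fin (i+1) → ℂ := fun a =>
      if (a : ℕ) = i then -(t i * G ⟨i+1, hi1N⟩ j') else 0 with hr
  have key : B.mulVec w = r := by
    funext a
    have ha : (a : ℕ) < i + 1 := a.isLt
    set a' : Fin N := ⟨a, by omega⟩ with ha'
    have h0 : ∑ b : Fin N, A a' b * G b j' = 0 := by
      have := congrFun (congrFun hAG a') j'
      rw [Matrix.mul_apply] at this
      rw [this, Matrix.one_apply_ne (Fin.ne_of_val_ne (show (a:ℕ) ≠ j by omega))]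
    -- split the sum
    have hsplit : ∑ b : Fin N, A a' b * G b j'
        = (∑ b : Fin (i+1), B a b * w b) + (if (a : ℕ) = i then t i else 0) * G ⟨i+1, hi1N⟩ j' := by
      have hsub : (Finset.univ.map (Fin.castLEEmb (show i + 2 ≤ N by omega))) ⊆
          (Finset.univ : Finset (Fin N)) := Finset.subset_univ _
      have hvan : ∀ b ∈ (Finset.univ : Finset (Fin N)),
          b ∉ (Finset.univ.map (Fin.castLEEmb (show i + 2 ≤ N by omega))) →
          A a' b * G b j' = 0 := by
        intro b _ hb
        have hbv : ¬ ((b : ℕ) < i + 2) := by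
          intro h
          exact hb (Finset.mem_map.mpr ⟨⟨b, h⟩, Finset.mem_univ _, by simp [Fin.ext_iff]⟩)
        have : A a' b = 0 := by
          rw [hAentry]
          have h1 : ¬ ((a' : ℕ) = b) := by simp only [ha']; omega
          have h2 : ¬ ((a' : ℕ) + 1 = b) := by simp only [ha']; omega
          have h3 : ¬ ((b : ℕ) + 1 = a') := by simp only [ha']; omega
          simp [h1, h2, h3]
        simp [this]
      rw [← Finset.sum_subset hsub hvan, Finset.sum_map]
      have : ∀ b : Fin (i+2), A a' (Fin.castLEEmb (show i + 2 ≤ N by omega) b) * G (Fin.castLEEmb (show i + 2 ≤ N by omega) b) j'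
          = (fun b : Fin (i+2) => A a' ⟨b, by omega⟩ * G ⟨b, by omega⟩ j') b := by
        intro b; rfl
      rw [Finset.sum_congr rfl fun b _ => this b]
      rw [Fin.sum_univ_castSucc]
      congr 1
      · apply Finset.sum_congr rfl
        intro b _
        have hcast : ((b.castSucc : Fin (i+2)) : ℕ) = (b : ℕ) := rfl
        have hAB : A a' ⟨(b.castSucc : Fin (i+2)), by omega⟩ = B a b := by
          rw [hAentry, hBentry]; simp only [ha', hcast]
        rw [hAB]
        rfl
      · have hlast : ((Fin.last (i+1) : Fin (i+2)) : ℕ) = i + 1 := rfl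
        have hAval : A a' ⟨(Fin.last (i+1) : Fin (i+2)), by omega⟩
            = (if (a : ℕ) = i then t i else 0) := by
          rw [hAentry]
          simp only [ha', hlast]
          by_cases hai : (a : ℕ) = i
          · have h1 : ¬ ((a : ℕ) = i + 1) := by omega
            simp [h1, hai]
          · have h1 : ¬ ((a : ℕ) = i + 1) := by omega
            have h2 : ¬ ((a : ℕ) + 1 = i + 1) := by omega
            have h3 : ¬ (i + 1 + 1 = (a : ℕ)) := by omega
            simp [h1, h2, h3, hai]
        rw [hAval]
        rfl
    rw [Matrix.mulVec]
    show ∑ b : Fin (i+1), B a b * w b = r a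
    rw [hsplit] at h0
    rw [hr]
    by_cases hai : (a : ℕ) = i
    · simp only [hai, if_true] at h0 ⊢
      linear_combination h0
    · simp only [hai, if_false] at h0 ⊢
      linear_combination h0
  -- now invert
  have hwB : w = B⁻¹.mulVec r := by
    rw [← key, Matrix.mulVec_mulVec, Matrix.nonsing_inv_mul B hdetB, Matrix.one_mulVec]
  have hwlast : w (Fin.last i) = B⁻¹ (Fin.last i) (Fin.last i) * r (Fin.last i) := by
    rw [hwB, Matrix.mulVec, dotProduct]
    apply Finset.sum_eq_single
    · intro b _ hb
      have : ¬ ((b : ℕ) = i) := fun h => hb (Fin.ext (by simp [h]))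
      simp [hr, this]
    · intro h; exact absurd (Finset.mem_univ _) h
  have hrlast : r (Fin.last i) = -(t i * G ⟨i+1, hi1N⟩ j') := by simp [hr]
  have hwlast2 : w (Fin.last i) = G ⟨i, hiN⟩ j' := by
    simp only [hw]
    congr 1
  rw [hrlast] at hwlast
  rw [hwlast2] at hwlast
  rw [hwlast]
  ring


theorem tri_prod_aux
    (N : ℕ) (v : ℕ → ℝ) (t : ℕ → ℂ) (lam : ℝ)
    (j : ℕ) (hjN : j < N)
    (hfull : IsUnit (triMatrix N v t - (lam : ℂ) • (1 : Matrix (Fin N) (Fin N) ℂ))) :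
    ∀ d i (hi : i + d = j),
      (∀ k ∈ Finset.Ico i j,
        IsUnit (triMatrix (k + 1) v t - (lam : ℂ) • (1 : Matrix (Fin (k + 1)) (Fin (k + 1)) ℂ))) →
      (triMatrix N v t - (lam : ℂ) • (1 : Matrix (Fin N) (Fin N) ℂ))⁻¹
          ⟨i, by omega⟩ ⟨j, hjN⟩
        = (-1 : ℂ) ^ d *
          (∏ k ∈ Finset.Ico i j,
            ((triMatrix (k + 1) v t - (lam : ℂ) • (1 : Matrix (Fin (k + 1)) (Fin (k + 1)) ℂ))⁻¹
                (Fin.last k) (Fin.last k) * t k)) *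
          (triMatrix N v t - (lam : ℂ) • (1 : Matrix (Fin N) (Fin N) ℂ))⁻¹ ⟨j, hjN⟩ ⟨j, hjN⟩ := by
  intro d
  induction d with
  | zero =>
    intro i hi _
    have : i = j := by omega
    subst this
    simp
  | succ d ih =>
    intro i hi hsub
    have hij : i < j := by omega
    rw [tri_step N v t lam i j hij hjN hfull (hsub i (Finset.mem_Ico.mpr ⟨le_refl i, hij⟩))]
    rw [ih (i + 1) (by omega) (fun k hk => hsub k (by
      rw [Finset.mem_Ico] at hk ⊢; omega))]
    rw [Finset.prod_eq_prod_Ico_succ_bot hij]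
    ring

/-- product formula for the resolvent of a tridiagonal Hermitian matrix.
Here indices are 0-based: for `i < j < N`, the `(i,j)` resolvent entry of the full matrix
factors as `(-1)^{j-i}` times the product over `k = i, …, j-1` of the `(k,k)` resolvent
entry of the top-left `(k+1) × (k+1)` principal submatrix times `t k`, times the `(j,j)`
resolvent entry of the full matrix. -/
theorem tridiagonal_product_formula
    (N : ℕ) (v : ℕ → ℝ) (t : ℕ → ℂ) (lam : ℝ)
    (i j : ℕ) (hij : i < j) (hjN : j < N)
    (hfull : IsUnit (triMatrix N v t - (lam : ℂ) • (1 : Matrix (Fin N) (Fin N) ℂ)))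
    (hsub : ∀ k ∈ Finset.Ico i j,
      IsUnit (triMatrix (k + 1) v t - (lam : ℂ) • (1 : Matrix (Fin (k + 1)) (Fin (k + 1)) ℂ))) :
    (triMatrix N v t - (lam : ℂ) • (1 : Matrix (Fin N) (Fin N) ℂ))⁻¹
        ⟨i, lt_trans hij hjN⟩ ⟨j, hjN⟩
      = (-1 : ℂ) ^ (j - i) *
        (∏ k ∈ Finset.Ico i j,
          ((triMatrix (k + 1) v t - (lam : ℂ) • (1 : Matrix (Fin (k + 1)) (Fin (k + 1)) ℂ))⁻¹
              (Fin.last k) (Fin.last k) * t k)) *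
        (triMatrix N v t - (lam : ℂ) • (1 : Matrix (Fin N) (Fin N) ℂ))⁻¹ ⟨j, hjN⟩ ⟨j, hjN⟩ := by
  exact tri_prod_aux N v t lam j hjN hfull (j - i) i (by omega) hsub
end

section
/- Wegner estimate for Wigner blocks: let V be a Wigner block matrix of width W whose diagonal variables d_i have a bounded density h. Then for every Hermitian W×W matrix A and every t > 0: P( ‖(V - A)⁻¹‖ > t·W^{3/2} ) ≤ 2π‖h‖_∞ / t. Moreover, if V₁ and V₂ are two independent Wigner block matrices with the same distribution, then for all Hermitian W×W matrices A, B, every W×W matrix C, and every t > 0: P( ‖M⁻¹‖ > t·W^{3/2} ) ≤ 4π‖h‖_∞ / t, where M is the 2W×2W block matrix with blocks V₁ - A, C in the first block row and C†, V₂ - B in the second (the norm being interpreted as +∞ when the matrix is not invertible). -/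
open MeasureTheory ProbabilityTheory Matrix
open scoped ENNReal NNReal

/-- Matrices inherit the product measurable structure. -/
instance matrixMeasurableSpace {m n α : Type*} [MeasurableSpace α] :
    MeasurableSpace (Matrix m n α) :=
  inferInstanceAs (MeasurableSpace (m → n → α))

/-- The operator (`ℓ² → ℓ²`) norm of a square complex matrix. -/
noncomputable def opNorm {m : Type*} [Fintype m] [DecidableEq m] (M : Matrix m m ℂ) : ℝ :=
  ‖(Matrix.toEuclideanCLM (𝕜 := ℂ) M : EuclideanSpace ℂ m →L[ℂ] EuclideanSpace ℂ m)‖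

/-- `invNormGT M c` holds when `M` is not invertible or `‖M⁻¹‖ > c` (i.e. the inverse
norm is interpreted as `+∞` for singular matrices). -/
def invNormGT {m : Type*} [Fintype m] [DecidableEq m] (M : Matrix m m ℂ) (c : ℝ) : Prop :=
  ¬ IsUnit M ∨ c < opNorm M⁻¹

/-- The Wigner block matrix of width `W`: `V(i,i) = d i / √W`, for `i < j`,
`V(i,j) = a i j / √W` and `V(j,i) = conj (a i j) / √W`. -/
noncomputable def wignerMatrix (W : ℕ) (d : ℕ → ℝ) (a : ℕ → ℕ → ℂ) :
    Matrix (Fin W) (Fin W) ℂ := fun p q =>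
  if (p : ℕ) = q then ((d p : ℂ) / (Real.sqrt W : ℂ))
  else if (p : ℕ) < q then a p q / (Real.sqrt W : ℂ)
  else (starRingEnd ℂ) (a q p) / (Real.sqrt W : ℂ)

/-- Hypotheses on the entries of a Wigner block matrix: the diagonal variables `d` are
i.i.d. with density `h`, the off-diagonal variables `a` are i.i.d. with density `g`,
centered with a fourth moment, `d` has a second moment, and all the variables are
jointly independent. -/
def WignerHyp (Ω : Type) [MeasureSpace Ω] (d : ℕ → Ω → ℝ) (a : ℕ → ℕ → Ω → ℂ)
    (h : ℝ → ℝ) (g : ℂ → ℝ) : Prop :=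
  (∀ k, Measurable (d k)) ∧ (∀ i j, Measurable (a i j)) ∧
  (∀ k, Measure.map (d k) ℙ
      = (volume : Measure ℝ).withDensity (fun x => ENNReal.ofReal (h x))) ∧
  (∀ i j, Measure.map (a i j) ℙ
      = (volume : Measure ℂ).withDensity (fun z => ENNReal.ofReal (g z))) ∧
  (∀ i j, ∫ ω, a i j ω ∂(ℙ : Measure Ω) = 0) ∧
  (∀ i j, Integrable (fun ω => ‖a i j ω‖ ^ 4) (ℙ : Measure Ω)) ∧
  (∀ k, Integrable (fun ω => (d k ω) ^ 2) (ℙ : Measure Ω)) ∧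
  iIndepFun
    (fun k : ℕ ⊕ (ℕ × ℕ) =>
      Sum.elim (fun i ω => ((d i ω : ℝ) : ℂ)) (fun p ω => a p.1 p.2 ω) k) ℙ


variable {n : Type*} [Fintype n] [DecidableEq n]

/-- shifted matrix A - iε -/
noncomputable def shiftM (ε : ℝ) (A : Matrix n n ℂ) : Matrix n n ℂ :=
  A - ((ε : ℂ) * Complex.I) • 1

lemma smul_one_diag (z : ℂ) : (z • (1 : Matrix n n ℂ)) = diagonal (fun _ => z) := by
  ext p q
  by_cases h : p = q <;> simp [Matrix.one_apply, Matrix.diagonal_apply, h]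

lemma udu_const (U : Matrix n n ℂ) (hU : U ∈ Matrix.unitaryGroup n ℂ) (z : ℂ) :
    U * diagonal (fun _ => z) * star U = z • (1 : Matrix n n ℂ) := by
  have h1 : U * star U = 1 := Matrix.mem_unitaryGroup_iff.mp hU
  rw [← smul_one_diag, Matrix.mul_smul, Matrix.mul_one, Matrix.smul_mul, h1]

lemma udu_mul (U : Matrix n n ℂ) (hU : U ∈ Matrix.unitaryGroup n ℂ) (d e : n → ℂ) :
    (U * diagonal d * star U) * (U * diagonal e * star U)
      = U * diagonal (fun k => d k * e k) * star U := by
  have h1 : star U * U = 1 := Matrix.mem_unitaryGroup_iff'.mp hU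
  calc (U * diagonal d * star U) * (U * diagonal e * star U)
      = U * diagonal d * (star U * U) * diagonal e * star U := by
        simp only [Matrix.mul_assoc]
    _ = U * (diagonal d * diagonal e) * star U := by
        rw [h1]; simp only [Matrix.mul_assoc, Matrix.one_mul]
    _ = U * diagonal (fun k => d k * e k) * star U := by
        rw [Matrix.diagonal_mul_diagonal]

lemma udu_one (U : Matrix n n ℂ) (hU : U ∈ Matrix.unitaryGroup n ℂ) :
    U * diagonal (fun _ => (1:ℂ)) * star U = 1 := by
  have h1 : U * star U = 1 := Matrix.mem_unitaryGroup_iff.mp hU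
  have : diagonal (fun _ => (1:ℂ)) = (1 : Matrix n n ℂ) := by
    rw [← Matrix.diagonal_one]
  rw [this, Matrix.mul_one, h1]

lemma shiftM_decomp {A : Matrix n n ℂ} (hA : A.IsHermitian) (ε : ℝ) :
    shiftM ε A = (hA.eigenvectorUnitary : Matrix n n ℂ)
        * diagonal (fun k => (hA.eigenvalues k : ℂ) - (ε : ℂ) * Complex.I)
        * star (hA.eigenvectorUnitary : Matrix n n ℂ) := by
  set U := (hA.eigenvectorUnitary : Matrix n n ℂ)
  have hU : U ∈ Matrix.unitaryGroup n ℂ := hA.eigenvectorUnitary.2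
  have h1 : U * star U = 1 := Matrix.mem_unitaryGroup_iff.mp hU
  have hspec := hA.spectral_theorem
  rw [Unitary.conjStarAlgAut_apply] at hspec
  have : U * diagonal (fun k => (hA.eigenvalues k : ℂ) - (ε : ℂ) * Complex.I) * star U
      = U * diagonal (RCLike.ofReal ∘ hA.eigenvalues) * star U
        - ((ε : ℂ) * Complex.I) • 1 := by
    have hd : diagonal (fun k => (hA.eigenvalues k : ℂ) - (ε : ℂ) * Complex.I)
        = diagonal (RCLike.ofReal ∘ hA.eigenvalues)
          - diagonal (fun _ => (ε : ℂ) * Complex.I) := by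
      rw [Matrix.diagonal_sub]; rfl
    rw [hd, Matrix.mul_sub, Matrix.sub_mul, udu_const U hU]
  rw [shiftM, this, ← hspec]

lemma shiftM_entry_ne (x ε : ℝ) (hε : ε ≠ 0) : ((x : ℂ) - (ε : ℂ) * Complex.I) ≠ 0 := by
  intro h
  have := congrArg Complex.im h
  simp at this
  exact hε this

lemma shiftM_inv_decomp {A : Matrix n n ℂ} (hA : A.IsHermitian) {ε : ℝ} (hε : ε ≠ 0) :
    IsUnit (shiftM ε A) ∧
    (shiftM ε A)⁻¹ = (hA.eigenvectorUnitary : Matrix n n ℂ)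
        * diagonal (fun k => ((hA.eigenvalues k : ℂ) - (ε : ℂ) * Complex.I)⁻¹)
        * star (hA.eigenvectorUnitary : Matrix n n ℂ) := by
  set U := (hA.eigenvectorUnitary : Matrix n n ℂ)
  have hU : U ∈ Matrix.unitaryGroup n ℂ := hA.eigenvectorUnitary.2
  set B := U * diagonal (fun k => ((hA.eigenvalues k : ℂ) - (ε : ℂ) * Complex.I)⁻¹) * star U
  have hprod : shiftM ε A * B = 1 := by
    rw [shiftM_decomp hA ε, udu_mul U hU]
    have : (fun k => ((hA.eigenvalues k : ℂ) - (ε : ℂ) * Complex.I)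
        * ((hA.eigenvalues k : ℂ) - (ε : ℂ) * Complex.I)⁻¹) = fun _ => (1:ℂ) := by
      funext k
      exact mul_inv_cancel₀ (shiftM_entry_ne _ _ hε)
    rw [this, udu_one U hU]
  have hprod' : B * shiftM ε A = 1 := by
    rw [shiftM_decomp hA ε, udu_mul U hU]
    have : (fun k => ((hA.eigenvalues k : ℂ) - (ε : ℂ) * Complex.I)⁻¹
        * ((hA.eigenvalues k : ℂ) - (ε : ℂ) * Complex.I)) = fun _ => (1:ℂ) := by
      funext k
      exact inv_mul_cancel₀ (shiftM_entry_ne _ _ hε)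
    rw [this, udu_one U hU]
  exact ⟨⟨⟨shiftM ε A, B, hprod, hprod'⟩, rfl⟩, Matrix.inv_eq_right_inv hprod⟩

lemma trace_shiftM_inv {A : Matrix n n ℂ} (hA : A.IsHermitian) {ε : ℝ} (hε : ε ≠ 0) :
    ((shiftM ε A)⁻¹).trace
      = ∑ k, ((hA.eigenvalues k : ℂ) - (ε : ℂ) * Complex.I)⁻¹ := by
  rw [(shiftM_inv_decomp hA hε).2]
  set U := (hA.eigenvectorUnitary : Matrix n n ℂ)
  have hU : star U * U = 1 := Matrix.mem_unitaryGroup_iff'.mp hA.eigenvectorUnitary.2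
  rw [Matrix.trace_mul_cycle, hU, Matrix.one_mul, Matrix.trace_diagonal]

lemma im_inv_sub_smul (x : ℝ) {ε : ℝ} (hε : 0 < ε) :
    (((x : ℂ) - (ε : ℂ) * Complex.I)⁻¹).im = ε / (x ^ 2 + ε ^ 2) := by
  rw [Complex.inv_im]
  have h1 : ((x : ℂ) - (ε : ℂ) * Complex.I).im = -ε := by simp
  have h2 : Complex.normSq ((x : ℂ) - (ε : ℂ) * Complex.I) = x ^ 2 + ε ^ 2 := by
    simp [Complex.normSq_apply]; ring
  rw [h1, h2]; ring

lemma imtr_eq {A : Matrix n n ℂ} (hA : A.IsHermitian) {ε : ℝ} (hε : 0 < ε) :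
    (((shiftM ε A)⁻¹).trace).im = ∑ k, ε / ((hA.eigenvalues k) ^ 2 + ε ^ 2) := by
  rw [trace_shiftM_inv hA hε.ne', Complex.im_sum]
  exact Finset.sum_congr rfl fun k _ => im_inv_sub_smul _ hε

lemma imtr_ge {A : Matrix n n ℂ} (hA : A.IsHermitian) {ε : ℝ} (hε : 0 < ε)
    (hk : ∃ k, |hA.eigenvalues k| ≤ ε) :
    1 / (2 * ε) ≤ (((shiftM ε A)⁻¹).trace).im := by
  obtain ⟨k, hk⟩ := hk
  rw [imtr_eq hA hε]
  have hterm : 1 / (2 * ε) ≤ ε / ((hA.eigenvalues k) ^ 2 + ε ^ 2) := by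
    rw [div_le_div_iff₀ (by positivity) (by positivity)]
    nlinarith [sq_abs (hA.eigenvalues k),
      mul_self_le_mul_self (abs_nonneg (hA.eigenvalues k)) hk]
  refine hterm.trans ?_
  exact Finset.single_le_sum (f := fun j => ε / ((hA.eigenvalues j) ^ 2 + ε ^ 2))
    (fun j _ => by positivity) (Finset.mem_univ k)


lemma opNorm_unitary [Nonempty n] {U : Matrix n n ℂ} (hU : U ∈ Matrix.unitaryGroup n ℂ) :
    opNorm U = 1 := by
  have h1 : star U * U = 1 := Matrix.mem_unitaryGroup_iff'.mp hU
  set T := Matrix.toEuclideanCLM (𝕜 := ℂ) U with hT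
  have hsq : ‖T‖ * ‖T‖ = 1 := by
    have : star T * T = 1 := by
      rw [hT, ← map_star, ← _root_.map_mul, h1, _root_.map_one]
    rw [← CStarRing.norm_star_mul_self, this, norm_one]
  have h0 : (0:ℝ) ≤ ‖T‖ := norm_nonneg _
  rcases mul_self_eq_one_iff.mp hsq with h | h
  · exact h
  · linarith

lemma opNorm_diagonal_le [Nonempty n] (d : n → ℂ) (b : ℝ) (hb : ∀ k, ‖d k‖ ≤ b) :
    opNorm (diagonal d) ≤ b := by
  have hb0 : 0 ≤ b := le_trans (norm_nonneg _) (hb (Classical.arbitrary n))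
  apply ContinuousLinearMap.opNorm_le_bound _ hb0
  intro x
  have hx : x = (WithLp.equiv 2 (n → ℂ)).symm (WithLp.equiv 2 (n → ℂ) x) := by simp
  rw [hx, WithLp.equiv_symm_apply, Matrix.toEuclideanCLM_toLp]
  set v := WithLp.equiv 2 (n → ℂ) x
  rw [EuclideanSpace.norm_eq, EuclideanSpace.norm_eq]
  rw [← Real.sqrt_sq hb0, ← Real.sqrt_mul (sq_nonneg b)]
  apply Real.sqrt_le_sqrt
  rw [Finset.mul_sum]
  apply Finset.sum_le_sum
  intro k _
  simp only [PiLp.toLp_apply, Matrix.mulVec_diagonal, norm_mul]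
  have h2 : ‖d k‖ ≤ b := hb k
  have h3 : ‖d k‖ * ‖v k‖ ≤ b * ‖v k‖ := mul_le_mul_of_nonneg_right h2 (norm_nonneg _)
  calc (‖d k‖ * ‖v k‖) ^ 2 ≤ (b * ‖v k‖) ^ 2 :=
        pow_le_pow_left₀ (by positivity) h3 2
    _ = b ^ 2 * ‖v k‖ ^ 2 := by ring

lemma opNorm_udu_le [Nonempty n] {U : Matrix n n ℂ} (hU : U ∈ Matrix.unitaryGroup n ℂ)
    (d : n → ℂ) (b : ℝ) (hb : ∀ k, ‖d k‖ ≤ b) :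
    opNorm (U * diagonal d * star U) ≤ b := by
  have hb0 : 0 ≤ b := le_trans (norm_nonneg _) (hb (Classical.arbitrary n))
  have hstar : star U ∈ Matrix.unitaryGroup n ℂ := by
    rw [Matrix.mem_unitaryGroup_iff]
    simpa using Matrix.mem_unitaryGroup_iff'.mp hU
  calc opNorm (U * diagonal d * star U)
      ≤ opNorm U * opNorm (diagonal d) * opNorm (star U) := by
        unfold opNorm
        rw [_root_.map_mul, _root_.map_mul]
        exact le_trans (norm_mul_le _ _)
          (mul_le_mul_of_nonneg_right (norm_mul_le _ _) (norm_nonneg _))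
    _ ≤ b := by
        rw [opNorm_unitary hU, opNorm_unitary hstar]
        simpa using opNorm_diagonal_le d b hb

lemma small_eig_of_invNormGT [Nonempty n] {A : Matrix n n ℂ} (hA : A.IsHermitian)
    {c : ℝ} (hc : 0 < c) (hbad : invNormGT A c) :
    ∃ k, |hA.eigenvalues k| ≤ 1 / c := by
  by_contra hcon
  push_neg at hcon
  have hne : ∀ k, hA.eigenvalues k ≠ 0 := by
    intro k hk
    have := hcon k
    rw [hk] at this
    simp at this
    have : (0:ℝ) < 1 / c := by positivity
    linarith
  have hunit : IsUnit A := by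
    rw [Matrix.isUnit_iff_isUnit_det, hA.det_eq_prod_eigenvalues, isUnit_iff_ne_zero]
    apply Finset.prod_ne_zero_iff.mpr
    intro k _
    intro h
    exact hne k (RCLike.ofReal_eq_zero.mp h)
  have hinv : A⁻¹ = (hA.eigenvectorUnitary : Matrix n n ℂ)
      * diagonal (fun k => ((hA.eigenvalues k : ℂ))⁻¹)
      * star (hA.eigenvectorUnitary : Matrix n n ℂ) := by
    apply Matrix.inv_eq_right_inv
    nth_rewrite 1 [hA.spectral_theorem]
    rw [Unitary.conjStarAlgAut_apply]
    rw [udu_mul _ hA.eigenvectorUnitary.2]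
    have : (fun k => (RCLike.ofReal ∘ hA.eigenvalues) k * ((hA.eigenvalues k : ℂ))⁻¹)
        = fun _ => (1:ℂ) := by
      funext k
      simp only [Function.comp]
      exact mul_inv_cancel₀ (RCLike.ofReal_ne_zero.mpr (hne k))
    rw [this, udu_one _ hA.eigenvectorUnitary.2]
  have hop : opNorm A⁻¹ ≤ c := by
    rw [hinv]
    apply opNorm_udu_le hA.eigenvectorUnitary.2
    intro k
    rw [norm_inv]
    have h1 : ‖((hA.eigenvalues k : ℂ))‖ = |hA.eigenvalues k| := by
      exact Complex.norm_real _
    rw [h1]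
    have h2 : 1 / c < |hA.eigenvalues k| := hcon k
    rw [inv_le_comm₀ (lt_trans (by positivity) h2) hc, ← one_div]
    linarith
  rcases hbad with h | h
  · exact h hunit
  · linarith

-- PART 3: rank one perturbation

lemma isHermitian_add_real_smul_std {A : Matrix n n ℂ} (hA : A.IsHermitian) (i : n) (t : ℝ) :
    (A + (t : ℂ) • Matrix.single i i 1).IsHermitian := by
  apply hA.add
  unfold Matrix.IsHermitian
  ext p q
  simp [Matrix.conjTranspose_apply, Matrix.single, Matrix.smul_apply, and_comm]
  split_ifs <;> simp

lemma resolv_identities {A : Matrix n n ℂ} (hA : A.IsHermitian) {ε : ℝ} (hε : 0 < ε) :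
    (shiftM ε A) * (shiftM ε A)⁻¹ = 1 ∧ (shiftM ε A)⁻¹ * (shiftM ε A) = 1 := by
  have h := (shiftM_inv_decomp hA hε.ne').1
  have hdet := (Matrix.isUnit_iff_isUnit_det _).mp h
  exact ⟨Matrix.mul_nonsing_inv _ hdet, Matrix.nonsing_inv_mul _ hdet⟩

/-- Imaginary part of diagonal resolvent entries: formula and positivity. -/
lemma im_resolv_entry {A : Matrix n n ℂ} (hA : A.IsHermitian) {ε : ℝ} (hε : 0 < ε) (i : n) :
    (((shiftM ε A)⁻¹) i i).im
      = ε * ∑ k, Complex.normSq (((shiftM ε A)⁻¹) i k)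
    ∧ 0 < (((shiftM ε A)⁻¹) i i).im := by
  set S := shiftM ε A with hS
  set G := (shiftM ε A)⁻¹ with hG
  obtain ⟨hSG, hGS⟩ := resolv_identities hA hε
  have hSH : Sᴴ = A + ((ε : ℂ) * Complex.I) • 1 := by
    rw [hS, shiftM, Matrix.conjTranspose_sub, hA.eq, Matrix.conjTranspose_smul,
      Matrix.conjTranspose_one]
    rw [sub_eq_add_neg]
    congr 1
    rw [← neg_smul]
    congr 1
    simp [Complex.ext_iff]
  have hSHGH : Sᴴ * Gᴴ = 1 := by
    rw [← Matrix.conjTranspose_mul, hGS, Matrix.conjTranspose_one]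
  have hkey : G - Gᴴ = (2 * ((ε : ℂ) * Complex.I)) • (G * Gᴴ) := by
    have h1 : G * Sᴴ * Gᴴ = G := by rw [Matrix.mul_assoc, hSHGH, Matrix.mul_one]
    have h2 : G * S * Gᴴ = Gᴴ := by rw [hGS, Matrix.one_mul]
    have h3 : Sᴴ - S = (2 * ((ε : ℂ) * Complex.I)) • 1 := by
      rw [hSH, hS, shiftM]
      ext p q
      simp [Matrix.sub_apply, Matrix.smul_apply, Matrix.one_apply]
      split_ifs <;> ring
    calc G - Gᴴ = G * Sᴴ * Gᴴ - G * S * Gᴴ := by rw [h1, h2]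
      _ = G * (Sᴴ - S) * Gᴴ := by rw [Matrix.mul_sub, Matrix.sub_mul]
      _ = (2 * ((ε : ℂ) * Complex.I)) • (G * Gᴴ) := by
          rw [h3, Matrix.mul_smul, Matrix.mul_one, Matrix.smul_mul]
  have hentry := congrArg (fun M : Matrix n n ℂ => (M i i).im) hkey
  simp only [Matrix.sub_apply, Matrix.smul_apply, Matrix.conjTranspose_apply] at hentry
  have hGG : (G * Gᴴ) i i = ((∑ k, Complex.normSq (G i k) : ℝ) : ℂ) := by
    rw [Matrix.mul_apply]
    push_cast
    apply Finset.sum_congr rfl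
    intro k _
    rw [Matrix.conjTranspose_apply]
    rw [Complex.normSq_eq_conj_mul_self]
    rw [Complex.star_def]
    ring
  rw [hGG] at hentry
  have him : (G i i).im = ε * ∑ k, Complex.normSq (G i k) := by
    have hstar : star (G i i) = (starRingEnd ℂ) (G i i) := rfl
    rw [hstar, smul_eq_mul] at hentry
    simp only [Complex.sub_im, Complex.conj_im, Complex.mul_im, Complex.mul_re,
      Complex.ofReal_re, Complex.ofReal_im, Complex.I_re, Complex.I_im,
      Complex.re_ofNat, Complex.im_ofNat] at hentry
    ring_nf at hentry ⊢
    linarith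
  refine ⟨him, ?_⟩
  rw [him]
  have hrow : ∃ k, G i k ≠ 0 := by
    by_contra hcon
    push_neg at hcon
    have h1 : (G * S) i i = 1 := by rw [hGS]; simp [Matrix.one_apply]
    rw [Matrix.mul_apply] at h1
    simp only [hcon, zero_mul, Finset.sum_const_zero] at h1
    exact one_ne_zero h1.symm
  obtain ⟨k, hk⟩ := hrow
  have hpos : 0 < ∑ j, Complex.normSq (G i j) := by
    apply Finset.sum_pos' (fun j _ => Complex.normSq_nonneg _)
    exact ⟨k, Finset.mem_univ k, Complex.normSq_pos.mpr hk⟩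
  positivity

/-- Rank one perturbation: diagonal entry of resolvent as Poisson kernel. -/
lemma rank_one_formula {A₀ : Matrix n n ℂ} (hA₀ : A₀.IsHermitian) {ε : ℝ} (hε : 0 < ε) (i : n) :
    ∃ a b : ℝ, 0 < b ∧ ∀ t : ℝ,
      (((shiftM ε (A₀ + (t : ℂ) • Matrix.single i i 1))⁻¹) i i).im
        = b / ((t - a) ^ 2 + b ^ 2) := by
  set g := ((shiftM ε A₀)⁻¹) i i with hgdef
  have hgim : 0 < g.im := (im_resolv_entry hA₀ hε i).2
  have hgne : g ≠ 0 := fun h => by rw [h] at hgim; simp at hgim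
  set w := -g⁻¹ with hwdef
  have hwim : 0 < w.im := by
    rw [hwdef]
    simp only [Complex.neg_im, Complex.inv_im]
    rw [neg_div, neg_neg]
    exact div_pos hgim (Complex.normSq_pos.mpr hgne)
  refine ⟨w.re, w.im, hwim, fun t => ?_⟩
  set At := A₀ + (t : ℂ) • Matrix.single i i 1 with hAt
  have hAtherm : At.IsHermitian := isHermitian_add_real_smul_std hA₀ i t
  obtain ⟨hS0G0, hG0S0⟩ := resolv_identities hA₀ hε
  obtain ⟨hStGt, hGtSt⟩ := resolv_identities hAtherm hε
  set G0 := (shiftM ε A₀)⁻¹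
  set Gt := (shiftM ε At)⁻¹
  have hshift : shiftM ε At = shiftM ε A₀ + (t : ℂ) • Matrix.single i i 1 := by
    rw [shiftM, shiftM, hAt, add_sub_right_comm]
  have hdiff : Gt - G0 = (-(t:ℂ)) • (Gt * (Matrix.single i i 1 * G0)) := by
    have h1 : Gt * (shiftM ε A₀) * G0 = Gt := by
      rw [Matrix.mul_assoc, hS0G0, Matrix.mul_one]
    have h2 : Gt * (shiftM ε At) * G0 = G0 := by rw [hGtSt, Matrix.one_mul]
    calc Gt - G0 = Gt * (shiftM ε A₀) * G0 - Gt * (shiftM ε At) * G0 := by rw [h1, h2]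
      _ = Gt * ((shiftM ε A₀) - (shiftM ε At)) * G0 := by rw [Matrix.mul_sub, Matrix.sub_mul]
      _ = (-(t:ℂ)) • (Gt * (Matrix.single i i 1 * G0)) := by
          rw [hshift]
          rw [sub_add_cancel_left]
          rw [← neg_smul, Matrix.mul_smul, Matrix.smul_mul, Matrix.mul_assoc]
  have hEG0 : ∀ b : n, (Matrix.single i i (1:ℂ) * G0) i b = G0 i b := by
    intro b; rw [Matrix.single_mul_apply_same, one_mul]
  have hentry : Gt i i - G0 i i = (-(t:ℂ)) * (Gt i i * G0 i i) := by
    have hd := congrArg (fun M : Matrix n n ℂ => M i i) hdiff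
    simp only [Matrix.sub_apply, Matrix.smul_apply] at hd
    rw [hd]
    have hsum : (Gt * (Matrix.single i i (1:ℂ) * G0)) i i = Gt i i * G0 i i := by
      rw [Matrix.mul_apply]
      rw [Finset.sum_eq_single i]
      · rw [hEG0]
      · intro b _ hb
        rw [Matrix.single_mul_apply_of_ne (1:ℂ) i i b i hb, mul_zero]
      · intro h; exact absurd (Finset.mem_univ i) h
    rw [hsum]
    simp [smul_eq_mul]
  -- algebraic solution
  have hgg : G0 i i = g := rfl
  rw [hgg] at hentry
  have hkey : Gt i i * (1 + (t:ℂ) * g) = g := by linear_combination hentry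
  have hfac : (1 + (t:ℂ) * g) = g * ((t:ℂ) - w) := by
    rw [hwdef, sub_neg_eq_add, mul_add, mul_inv_cancel₀ hgne]
    ring
  have htw : ((t:ℂ) - w) ≠ 0 := by
    intro h
    have := congrArg Complex.im h
    simp only [Complex.sub_im, Complex.ofReal_im, Complex.zero_im] at this
    linarith
  rw [hfac] at hkey
  have h2 : Gt i i * ((t:ℂ) - w) = 1 := by
    apply mul_left_cancel₀ hgne
    rw [mul_one]
    linear_combination hkey
  have hGt : Gt i i = ((t:ℂ) - w)⁻¹ := by
    rw [← one_div]
    exact eq_div_of_mul_eq htw h2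
  rw [hGt, Complex.inv_im]
  have hre : ((t:ℂ) - w).im = -w.im := by simp
  have hnsq : Complex.normSq ((t:ℂ) - w) = (t - w.re)^2 + w.im^2 := by
    rw [Complex.normSq_apply]
    simp [Complex.sub_re, Complex.sub_im]
    ring
  rw [hre, hnsq, neg_neg]

-- PART 4

-- Poisson integral
lemma poisson_integral {a b s : ℝ} (hb : 0 < b) (hs : 0 < s) :
    ∫ x : ℝ, b / ((x / s - a) ^ 2 + b ^ 2) = Real.pi * s := by
  have hbne : b ≠ 0 := hb.ne'
  have hform : ∀ x : ℝ, b / ((x / s - a) ^ 2 + b ^ 2)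
      = b⁻¹ * (1 + ((x / s - a) / b) ^ 2)⁻¹ := by
    intro x
    rw [div_pow]
    rw [eq_comm]
    have h1 : (x / s - a) ^ 2 + b ^ 2 > 0 := by positivity
    field_simp
    ring
  simp_rw [hform]
  rw [MeasureTheory.integral_const_mul]
  have h1 : ∫ x : ℝ, (1 + ((x / s - a) / b) ^ 2)⁻¹
      = |s| • ∫ y : ℝ, (1 + ((y - a) / b) ^ 2)⁻¹ := by
    exact MeasureTheory.Measure.integral_comp_div (fun y => (1 + ((y - a) / b) ^ 2)⁻¹) s
  rw [h1]
  have h2 : ∫ y : ℝ, (1 + ((y - a) / b) ^ 2)⁻¹ = ∫ y : ℝ, (1 + (y / b) ^ 2)⁻¹ := by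
    have := MeasureTheory.integral_add_right_eq_self (μ := volume)
      (fun y : ℝ => (1 + (y / b) ^ 2)⁻¹) (-a)
    simp_rw [sub_eq_add_neg]
    exact this
  rw [h2]
  have h3 : ∫ y : ℝ, (1 + (y / b) ^ 2)⁻¹ = |b| • ∫ y : ℝ, (1 + y ^ 2)⁻¹ :=
    MeasureTheory.Measure.integral_comp_div (fun y => (1 + y ^ 2)⁻¹) b
  rw [h3, integral_univ_inv_one_add_sq, abs_of_pos hb, abs_of_pos hs]
  simp [smul_eq_mul]
  field_simp

lemma poisson_integrable {a b s : ℝ} (hb : 0 < b) (hs : 0 < s) :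
    Integrable (fun x : ℝ => b / ((x / s - a) ^ 2 + b ^ 2)) := by
  have h0 : Integrable (fun y : ℝ => (1 + y ^ 2)⁻¹) := integrable_inv_one_add_sq
  have h1 : Integrable (fun y : ℝ => (1 + (y / b) ^ 2)⁻¹) := h0.comp_div hb.ne'
  have h2 : Integrable (fun y : ℝ => (1 + ((y - a) / b) ^ 2)⁻¹) := by
    have := h1.comp_sub_right a
    exact this
  have h3 : Integrable (fun x : ℝ => (1 + ((x / s - a) / b) ^ 2)⁻¹) := h2.comp_div hs.ne'
  have h4 := h3.const_mul b⁻¹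
  apply h4.congr
  filter_upwards with x
  rw [div_pow, eq_comm]
  have h1' : (x / s - a) ^ 2 + b ^ 2 > 0 := by positivity
  field_simp
  ring

lemma poisson_lintegral {a b s : ℝ} (hb : 0 < b) (hs : 0 < s) :
    ∫⁻ x : ℝ, ENNReal.ofReal (b / ((x / s - a) ^ 2 + b ^ 2))
      = ENNReal.ofReal (Real.pi * s) := by
  rw [← MeasureTheory.ofReal_integral_eq_lintegral_ofReal (poisson_integrable hb hs)]
  · rw [poisson_integral hb hs]
  · filter_upwards with x
    positivity

-- Measurability toolkit
variable {n : Type*} [Fintype n] [DecidableEq n]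
variable {α : Type*} [MeasurableSpace α]

lemma measurable_matrix_entry {F : α → Matrix n n ℂ} (hF : Measurable F) (i j : n) :
    Measurable fun x => F x i j :=
  ((measurable_pi_apply j).comp ((measurable_pi_apply i).comp hF))

lemma measurable_matrix_of_entries {F : α → Matrix n n ℂ}
    (hF : ∀ i j, Measurable fun x => F x i j) : Measurable F :=
  measurable_pi_lambda _ fun i => measurable_pi_lambda _ fun j => hF i j

lemma measurable_det {F : α → Matrix n n ℂ} (hF : Measurable F) :
    Measurable fun x => (F x).det := by
  have : (fun x => (F x).det)
      = fun x => ∑ σ : Equiv.Perm n, (Equiv.Perm.sign σ : ℂ) *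
          ∏ i, F x (σ i) i := by
    funext x
    rw [Matrix.det_apply']
  rw [this]
  apply Finset.measurable_sum
  intro σ _
  apply Measurable.const_mul
  apply Finset.measurable_prod
  intro i _
  exact measurable_matrix_entry hF (σ i) i

lemma measurable_complex_inv : Measurable fun z : ℂ => z⁻¹ := by
  have : (fun z : ℂ => z⁻¹)
      = fun z => (starRingEnd ℂ) z * (((Complex.normSq z)⁻¹ : ℝ) : ℂ) := by
    funext z
    rw [Complex.inv_def]
  rw [this]
  apply Measurable.mul
  · exact Complex.continuous_conj.measurable
  · exact Complex.measurable_ofReal.comp (Complex.continuous_normSq.measurable.inv)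

lemma measurable_matrix_inv {F : α → Matrix n n ℂ} (hF : Measurable F) :
    Measurable fun x => (F x)⁻¹ := by
  apply measurable_matrix_of_entries
  intro i j
  have : (fun x => (F x)⁻¹ i j)
      = fun x => ((F x).det)⁻¹ * (F x).adjugate i j := by
    funext x
    rw [Matrix.inv_def, Ring.inverse_eq_inv']
    simp [Matrix.smul_apply, smul_eq_mul]
  rw [this]
  apply Measurable.mul
  · exact measurable_complex_inv.comp (measurable_det hF)
  · have : (fun x => (F x).adjugate i j)
        = fun x => ((F x).updateRow j (Pi.single i 1)).det := by
      funext x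
      rw [Matrix.adjugate_apply]
    rw [this]
    apply measurable_det
    apply measurable_matrix_of_entries
    intro p q
    by_cases hp : p = j
    · subst hp
      simp only [Matrix.updateRow_self]
      exact measurable_const
    · simp only [Matrix.updateRow_ne hp]
      exact measurable_matrix_entry hF p q

lemma measurable_trace {F : α → Matrix n n ℂ} (hF : Measurable F) :
    Measurable fun x => (F x).trace := by
  apply Finset.measurable_sum
  intro i _
  exact measurable_matrix_entry hF i i

-- PART 5: probability core

lemma std_herm (i : n) (t : ℝ) :
    (((t : ℂ)) • Matrix.single i i (1:ℂ)).IsHermitian := by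
  unfold Matrix.IsHermitian
  ext p q
  simp [Matrix.conjTranspose_apply, Matrix.single, Matrix.smul_apply, and_comm]
  split_ifs <;> simp

lemma measurableSet_isHermitian :
    MeasurableSet {y : Matrix n n ℂ | y.IsHermitian} := by
  have : {y : Matrix n n ℂ | y.IsHermitian}
      = ⋂ p, ⋂ q, {y : Matrix n n ℂ | (starRingEnd ℂ) (y q p) = y p q} := by
    ext y
    simp only [Set.mem_setOf_eq, Set.mem_iInter]
    constructor
    · intro hy p q
      have := congrFun (congrFun hy p) q
      simpa [Matrix.conjTranspose_apply] using this
    · intro hy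
      ext p q
      simp only [Matrix.conjTranspose_apply]
      exact hy p q
  rw [this]
  apply MeasurableSet.iInter
  intro p
  apply MeasurableSet.iInter
  intro q
  apply measurableSet_eq_fun
  · exact Complex.continuous_conj.measurable.comp (measurable_matrix_entry measurable_id q p)
  · exact measurable_matrix_entry measurable_id p q

lemma perIndex {Ω : Type*} [MeasureSpace Ω] [IsProbabilityMeasure (ℙ : Measure Ω)]
    (M : Ω → Matrix n n ℂ) (hherm : ∀ ω, (M ω).IsHermitian)
    (i : n) {s ε Ch : ℝ} (hs : 0 < s) (hε : 0 < ε) (hCh : 0 ≤ Ch)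
    (X : Ω → ℝ) (hX : Measurable X)
    (hlaw : Measure.map X ℙ ≤ ENNReal.ofReal Ch • (volume : Measure ℝ))
    (hY : Measurable (fun ω => M ω - ((X ω : ℂ) / (s : ℂ)) • Matrix.single i i 1))
    (hindep : IndepFun (fun ω => M ω - ((X ω : ℂ) / (s : ℂ)) • Matrix.single i i 1) X ℙ) :
    ∫⁻ ω, ENNReal.ofReal ((((shiftM ε (M ω))⁻¹) i i).im) ∂ℙ
      ≤ ENNReal.ofReal (Ch * (Real.pi * s)) := by
  set Y := fun ω => M ω - ((X ω : ℂ) / (s : ℂ)) • Matrix.single i i 1 with hYdef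
  set F : Matrix n n ℂ × ℝ → ℝ≥0∞ := fun p =>
    ENNReal.ofReal ((((shiftM ε (p.1 + ((p.2 : ℂ) / (s : ℂ)) • Matrix.single i i 1))⁻¹) i i).im)
    with hFdef
  have hsC : (s : ℂ) ≠ 0 := Complex.ofReal_ne_zero.mpr hs.ne'
  have hFmeas : Measurable F := by
    apply ENNReal.measurable_ofReal.comp
    apply Complex.measurable_im.comp
    apply measurable_matrix_entry (measurable_matrix_inv ?_) i i
    apply measurable_matrix_of_entries
    intro p q
    have h1 : Measurable fun x : Matrix n n ℂ × ℝ => x.1 p q :=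
      measurable_matrix_entry measurable_fst p q
    have h2 : Measurable fun x : Matrix n n ℂ × ℝ =>
        (((x.2 : ℂ) / (s : ℂ)) • Matrix.single i i (1:ℂ)) p q := by
      have hent : ∀ x : Matrix n n ℂ × ℝ,
          (((x.2 : ℂ) / (s : ℂ)) • Matrix.single i i (1:ℂ)) p q
            = if i = p ∧ i = q then ((x.2 : ℂ) / (s : ℂ)) else 0 := by
        intro x
        rw [Matrix.smul_apply, Matrix.single, Matrix.of_apply]
        split_ifs <;> simp
      simp only [hent]
      by_cases hpq : i = p ∧ i = q
      · simp only [if_pos hpq]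
        exact (Complex.measurable_ofReal.comp measurable_snd).div_const (s:ℂ)
      · simp only [if_neg hpq]
        exact measurable_const
    have : (fun x : Matrix n n ℂ × ℝ =>
        shiftM ε (x.1 + ((x.2 : ℂ) / (s : ℂ)) • Matrix.single i i 1) p q)
        = fun x => x.1 p q + (((x.2 : ℂ) / (s : ℂ)) • Matrix.single i i (1:ℂ)) p q
          - (((ε : ℂ) * Complex.I) • (1 : Matrix n n ℂ)) p q := by
      funext x
      rw [shiftM, Matrix.sub_apply, Matrix.add_apply]
    rw [this]
    exact (h1.add h2).sub measurable_const
  have hMY : ∀ ω, M ω = Y ω + ((X ω : ℂ) / (s : ℂ)) • Matrix.single i i 1 := by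
    intro ω
    rw [hYdef]
    simp
  have hstep : ∫⁻ ω, ENNReal.ofReal ((((shiftM ε (M ω))⁻¹) i i).im) ∂ℙ
      = ∫⁻ ω, F (Y ω, X ω) ∂ℙ := by
    apply lintegral_congr
    intro ω
    have hF1 : F (Y ω, X ω) = ENNReal.ofReal ((((shiftM ε (Y ω
        + ((X ω : ℂ) / (s : ℂ)) • Matrix.single i i 1))⁻¹) i i).im) := rfl
    rw [hF1, ← hMY ω]
  rw [hstep]
  have hmap : Measure.map (fun ω => (Y ω, X ω)) ℙ = (Measure.map Y ℙ).prod (Measure.map X ℙ) :=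
    (indepFun_iff_map_prod_eq_prod_map_map hY.aemeasurable hX.aemeasurable).mp hindep
  rw [← lintegral_map hFmeas (hY.prodMk hX), hmap,
    lintegral_prod F hFmeas.aemeasurable]
  -- bound the inner integral for Hermitian y
  have hinner : ∀ y : Matrix n n ℂ, y.IsHermitian →
      ∫⁻ x, F (y, x) ∂(Measure.map X ℙ) ≤ ENNReal.ofReal (Ch * (Real.pi * s)) := by
    intro y hy
    obtain ⟨a, b, hb, hform⟩ := rank_one_formula hy hε i
    have hFval : ∀ x : ℝ, F (y, x) = ENNReal.ofReal (b / ((x / s - a) ^ 2 + b ^ 2)) := by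
      intro x
      have hF1 : F (y, x) = ENNReal.ofReal ((((shiftM ε (y
          + ((x : ℂ) / (s : ℂ)) • Matrix.single i i 1))⁻¹) i i).im) := rfl
      rw [hF1]
      congr 1
      have hcast : ((x : ℂ) / (s : ℂ)) = ((x / s : ℝ) : ℂ) := by push_cast; ring
      rw [hcast, hform (x / s)]
    calc ∫⁻ x, F (y, x) ∂(Measure.map X ℙ)
        ≤ ∫⁻ x, F (y, x) ∂(ENNReal.ofReal Ch • (volume : Measure ℝ)) :=
          lintegral_mono' hlaw le_rfl
      _ = ENNReal.ofReal Ch * ∫⁻ x, F (y, x) := lintegral_smul_measure _ _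
      _ = ENNReal.ofReal Ch * ENNReal.ofReal (Real.pi * s) := by
          congr 1
          calc ∫⁻ x, F (y, x)
              = ∫⁻ x, ENNReal.ofReal (b / ((x / s - a) ^ 2 + b ^ 2)) :=
                lintegral_congr fun x => hFval x
            _ = ENNReal.ofReal (Real.pi * s) := poisson_lintegral hb hs
      _ = ENNReal.ofReal (Ch * (Real.pi * s)) :=
          (ENNReal.ofReal_mul hCh).symm
  have hae : ∀ᵐ y ∂(Measure.map Y ℙ), y.IsHermitian := by
    rw [MeasureTheory.ae_map_iff hY.aemeasurable measurableSet_isHermitian]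
    filter_upwards with ω
    have h1 : ((X ω : ℂ) / (s : ℂ)) = ((X ω / s : ℝ) : ℂ) := by push_cast; ring
    show (M ω - ((X ω : ℂ) / (s : ℂ)) • Matrix.single i i 1).IsHermitian
    rw [h1]
    exact (hherm ω).sub (std_herm i (X ω / s))
  haveI : IsProbabilityMeasure (Measure.map Y ℙ) := Measure.isProbabilityMeasure_map hY.aemeasurable
  calc ∫⁻ y, ∫⁻ x, F (y, x) ∂(Measure.map X ℙ) ∂(Measure.map Y ℙ)
      ≤ ∫⁻ _, ENNReal.ofReal (Ch * (Real.pi * s)) ∂(Measure.map Y ℙ) := by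
        apply lintegral_mono_ae
        filter_upwards [hae] with y hy
        exact hinner y hy
    _ = ENNReal.ofReal (Ch * (Real.pi * s)) := by
        rw [lintegral_const, measure_univ, mul_one]

lemma freeze {Ω : Type*} [MeasureSpace Ω] [IsProbabilityMeasure (ℙ : Measure Ω)]
    {β γ : Type*} [MeasurableSpace β] [MeasurableSpace γ]
    (P1 : Ω → β) (P2 : Ω → γ) (h1 : Measurable P1) (h2 : Measurable P2)
    (hind : IndepFun P1 P2 ℙ) (F : β × γ → ℝ≥0∞) (hF : Measurable F) (K : ℝ≥0∞)
    (hbound : ∀ c : γ, ∫⁻ ω, F (P1 ω, c) ∂ℙ ≤ K) :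
    ∫⁻ ω, F (P1 ω, P2 ω) ∂ℙ ≤ K := by
  have hswap : IndepFun P2 P1 ℙ := hind.symm
  have hmap : Measure.map (fun ω => (P2 ω, P1 ω)) ℙ
      = (Measure.map P2 ℙ).prod (Measure.map P1 ℙ) :=
    (indepFun_iff_map_prod_eq_prod_map_map h2.aemeasurable h1.aemeasurable).mp hswap
  have hG : Measurable fun p : γ × β => F (p.2, p.1) :=
    hF.comp (measurable_snd.prodMk measurable_fst)
  have hstep : ∫⁻ ω, F (P1 ω, P2 ω) ∂ℙ
      = ∫⁻ p, F (p.2, p.1) ∂((Measure.map P2 ℙ).prod (Measure.map P1 ℙ)) := by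
    rw [← hmap, lintegral_map hG (h2.prodMk h1)]
  rw [hstep, lintegral_prod _ hG.aemeasurable]
  haveI : IsProbabilityMeasure (Measure.map P2 ℙ) := Measure.isProbabilityMeasure_map h2.aemeasurable
  calc ∫⁻ x, ∫⁻ y, F (y, x) ∂(Measure.map P1 ℙ) ∂(Measure.map P2 ℙ)
      ≤ ∫⁻ _, K ∂(Measure.map P2 ℙ) := by
        apply lintegral_mono
        intro x
        have hrw := lintegral_map (μ := (ℙ : Measure Ω)) (g := P1)
          (f := fun y => F (y, x)) (hF.comp (measurable_id.prodMk measurable_const)) h1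
        calc ∫⁻ y, F (y, x) ∂(Measure.map P1 ℙ) = ∫⁻ ω, F (P1 ω, x) ∂ℙ := hrw
          _ ≤ K := hbound x
    _ = K := by rw [lintegral_const, measure_univ, mul_one]

lemma wegner_abstract [Nonempty n] {Ω : Type*} [MeasureSpace Ω]
    [IsProbabilityMeasure (ℙ : Measure Ω)]
    (M : Ω → Matrix n n ℂ) (hM : Measurable M) (hherm : ∀ ω, (M ω).IsHermitian)
    {s Ch c : ℝ} (hs : 0 < s) (hCh : 0 ≤ Ch) (hc : 0 < c)
    (hper : ∀ i : n, ∫⁻ ω, ENNReal.ofReal ((((shiftM (1/c) (M ω))⁻¹) i i).im) ∂ℙ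
      ≤ ENNReal.ofReal (Ch * (Real.pi * s))) :
    ℙ {ω | invNormGT (M ω) c}
      ≤ ENNReal.ofReal (2 * (Fintype.card n) * Real.pi * s * Ch / c) := by
  have hε : 0 < 1/c := by positivity
  set f : Ω → ℝ≥0∞ := fun ω =>
    ∑ i : n, ENNReal.ofReal ((((shiftM (1/c) (M ω))⁻¹) i i).im) with hfdef
  have hGmeas : Measurable fun ω => (shiftM (1/c) (M ω))⁻¹ := by
    apply measurable_matrix_inv
    apply measurable_matrix_of_entries
    intro p q
    have : (fun ω => shiftM (1/c) (M ω) p q)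
        = fun ω => M ω p q - ((1/c : ℝ) : ℂ) * Complex.I * (1 : Matrix n n ℂ) p q := by
      funext ω
      simp [shiftM, Matrix.sub_apply, Matrix.smul_apply, smul_eq_mul]
    rw [this]
    exact (measurable_matrix_entry hM p q).sub measurable_const
  have hfmeas : Measurable f := by
    apply Finset.measurable_sum
    intro i _
    exact ENNReal.measurable_ofReal.comp (Complex.measurable_im.comp
      (measurable_matrix_entry hGmeas i i))
  have hsub : {ω | invNormGT (M ω) c} ⊆ {ω | ENNReal.ofReal (c/2) ≤ f ω} := by
    intro ω hω
    simp only [Set.mem_setOf_eq] at hω ⊢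
    have hk := small_eig_of_invNormGT (hherm ω) hc hω
    have himtr := imtr_ge (hherm ω) hε hk
    have heq : 1 / (2 * (1/c)) = c / 2 := by field_simp
    rw [heq] at himtr
    have htr : ((((shiftM (1/c) (M ω))⁻¹)).trace).im
        = ∑ i : n, ((((shiftM (1/c) (M ω))⁻¹)) i i).im := by
      rw [Matrix.trace]
      rw [Complex.im_sum]
      rfl
    rw [htr] at himtr
    calc ENNReal.ofReal (c/2) ≤ ENNReal.ofReal (∑ i : n, ((((shiftM (1/c) (M ω))⁻¹)) i i).im) :=
          ENNReal.ofReal_le_ofReal himtr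
      _ = f ω := by
          rw [hfdef]
          exact ENNReal.ofReal_sum_of_nonneg fun i _ => (im_resolv_entry (hherm ω) hε i).2.le
  have hcheb : ENNReal.ofReal (c/2) * ℙ {ω | ENNReal.ofReal (c/2) ≤ f ω} ≤ ∫⁻ ω, f ω ∂ℙ :=
    mul_meas_ge_le_lintegral₀ hfmeas.aemeasurable _
  have hlint : ∫⁻ ω, f ω ∂ℙ ≤ (Fintype.card n : ℝ≥0∞) * ENNReal.ofReal (Ch * (Real.pi * s)) := by
    rw [hfdef]
    rw [lintegral_finset_sum]
    · calc ∑ i : n, ∫⁻ ω, ENNReal.ofReal ((((shiftM (1/c) (M ω))⁻¹) i i).im) ∂ℙ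
          ≤ ∑ _i : n, ENNReal.ofReal (Ch * (Real.pi * s)) := Finset.sum_le_sum fun i _ => hper i
        _ = (Fintype.card n : ℝ≥0∞) * ENNReal.ofReal (Ch * (Real.pi * s)) := by
            rw [Finset.sum_const, Finset.card_univ, nsmul_eq_mul]
    · intro i _
      exact ENNReal.measurable_ofReal.comp (Complex.measurable_im.comp
        (measurable_matrix_entry hGmeas i i))
  have hchain : ℙ {ω | invNormGT (M ω) c}
      ≤ ((Fintype.card n : ℝ≥0∞) * ENNReal.ofReal (Ch * (Real.pi * s))) / ENNReal.ofReal (c/2) := by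
    rw [ENNReal.le_div_iff_mul_le (Or.inl (by simp [ENNReal.ofReal_eq_zero]; positivity))
      (Or.inl ENNReal.ofReal_ne_top)]
    calc ℙ {ω | invNormGT (M ω) c} * ENNReal.ofReal (c/2)
        = ENNReal.ofReal (c/2) * ℙ {ω | invNormGT (M ω) c} := mul_comm _ _
      _ ≤ ENNReal.ofReal (c/2) * ℙ {ω | ENNReal.ofReal (c/2) ≤ f ω} := by
          exact mul_le_mul_right (measure_mono hsub) _
      _ ≤ ∫⁻ ω, f ω ∂ℙ := hcheb
      _ ≤ (Fintype.card n : ℝ≥0∞) * ENNReal.ofReal (Ch * (Real.pi * s)) := hlint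
  refine hchain.trans ?_
  have hcard : (Fintype.card n : ℝ≥0∞) * ENNReal.ofReal (Ch * (Real.pi * s))
      = ENNReal.ofReal ((Fintype.card n : ℝ) * (Ch * (Real.pi * s))) := by
    rw [← ENNReal.ofReal_natCast (Fintype.card n), ← ENNReal.ofReal_mul (Nat.cast_nonneg _)]
  rw [hcard, ← ENNReal.ofReal_div_of_pos (by positivity)]
  apply ENNReal.ofReal_le_ofReal
  rw [div_le_div_iff₀ (by positivity) hc]
  have hpi := Real.pi_pos
  have hcard0 : (0:ℝ) ≤ (Fintype.card n : ℝ) := Nat.cast_nonneg _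
  nlinarith [mul_nonneg (mul_nonneg hcard0 hCh) (mul_nonneg hpi.le hs.le)]

lemma wigner_isHermitian (W : ℕ) (d : ℕ → ℝ) (a : ℕ → ℕ → ℂ) :
    (wignerMatrix W d a).IsHermitian := by
  unfold Matrix.IsHermitian
  ext p q
  rw [Matrix.conjTranspose_apply, wignerMatrix, wignerMatrix]
  rcases lt_trichotomy (p : ℕ) (q : ℕ) with hlt | heq | hgt
  · rw [if_neg (by omega), if_neg (by omega), if_pos hlt, if_neg (by omega)]
    simp [Complex.star_def, map_div₀, Complex.conj_conj, Complex.conj_ofReal]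
  · have hpq : p = q := Fin.ext heq
    subst hpq
    simp [Complex.star_def, map_div₀, Complex.conj_conj, Complex.conj_ofReal]
  · rw [if_neg (by omega), if_pos hgt, if_neg (by omega), if_neg (by omega)]
    simp [Complex.star_def, map_div₀, Complex.conj_conj, Complex.conj_ofReal]

lemma wigner_congr (W : ℕ) {d₁ d₂ : ℕ → ℝ} {a₁ a₂ : ℕ → ℕ → ℂ}
    (hd : ∀ k < W, d₁ k = d₂ k) (ha : ∀ p < W, ∀ q < W, a₁ p q = a₂ p q) :
    wignerMatrix W d₁ a₁ = wignerMatrix W d₂ a₂ := by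
  ext p q
  rw [wignerMatrix, wignerMatrix]
  split_ifs
  · rw [hd p p.isLt]
  · rw [ha p p.isLt q q.isLt]
  · rw [ha q q.isLt p p.isLt]

lemma wigner_zeroed (W : ℕ) (d : ℕ → ℝ) (a : ℕ → ℕ → ℂ) (i : Fin W) :
    wignerMatrix W d a - ((d (i : ℕ) : ℂ) / ((Real.sqrt W : ℝ) : ℂ))
        • Matrix.single i i 1
      = wignerMatrix W (Function.update d (i : ℕ) 0) a := by
  ext p q
  rw [Matrix.sub_apply, Matrix.smul_apply, wignerMatrix, wignerMatrix]
  have hE : Matrix.single i i (1:ℂ) p q = if i = p ∧ i = q then 1 else 0 := by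
    rw [Matrix.single, Matrix.of_apply]
  rw [hE]
  split_ifs with h1 h2 h3 h4 h5
  · -- p = q diagonal, i = p ∧ i = q
    obtain ⟨hip, hiq⟩ := h2
    subst hip
    rw [Function.update_self]
    simp
  · -- p = q diagonal, not (i = p and i = q)
    have hpi : (p : ℕ) ≠ (i : ℕ) := by
      intro hc
      exact h2 ⟨(Fin.ext hc).symm, (Fin.ext (by omega)).symm⟩
    rw [Function.update_of_ne hpi]
    simp
  · obtain ⟨hip, hiq⟩ := h4
    subst hip; subst hiq
    omega
  · simp
  · obtain ⟨hip, hiq⟩ := h5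
    subst hip; subst hiq
    omega
  · simp

lemma measurable_wigner_pack (W : ℕ) :
    Measurable (fun pr : (ℕ → ℝ) × (ℕ → ℕ → ℂ) => wignerMatrix W pr.1 pr.2) := by
  apply measurable_pi_lambda
  intro p
  apply measurable_pi_lambda
  intro q
  have : (fun pr : (ℕ → ℝ) × (ℕ → ℕ → ℂ) => wignerMatrix W pr.1 pr.2 p q)
      = fun pr => if (p : ℕ) = q then ((pr.1 p : ℂ) / (Real.sqrt W : ℂ))
        else if (p : ℕ) < q then pr.2 p q / (Real.sqrt W : ℂ)
        else (starRingEnd ℂ) (pr.2 q p) / (Real.sqrt W : ℂ) := by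
    funext pr
    rw [wignerMatrix]
  rw [this]
  split_ifs
  · exact (Complex.measurable_ofReal.comp
      ((measurable_pi_apply _).comp measurable_fst)).div_const _
  · exact (((measurable_pi_apply _).comp
      ((measurable_pi_apply _).comp measurable_snd))).div_const _
  · exact (Complex.continuous_conj.measurable.comp ((measurable_pi_apply _).comp
      ((measurable_pi_apply _).comp measurable_snd))).div_const _

-- fromBlocks lemmas
lemma fromBlocks_herm {W : ℕ} {A₁ A₂ : Matrix (Fin W) (Fin W) ℂ}
    (h1 : A₁.IsHermitian) (h2 : A₂.IsHermitian) (C : Matrix (Fin W) (Fin W) ℂ) :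
    (Matrix.fromBlocks A₁ C Cᴴ A₂).IsHermitian := by
  unfold Matrix.IsHermitian
  rw [Matrix.fromBlocks_conjTranspose, h1.eq, h2.eq, Matrix.conjTranspose_conjTranspose]

lemma fromBlocks_sub_std_inl {W : ℕ} (A₁ A₂ C D : Matrix (Fin W) (Fin W) ℂ)
    (i : Fin W) (z : ℂ) :
    Matrix.fromBlocks A₁ C D A₂ - z • Matrix.single (Sum.inl i) (Sum.inl i) 1
      = Matrix.fromBlocks (A₁ - z • Matrix.single i i 1) C D A₂ := by
  ext p q
  rcases p with p | p <;> rcases q with q | q <;>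
    simp [Matrix.sub_apply, Matrix.smul_apply, Matrix.single, Matrix.of_apply]

lemma fromBlocks_sub_std_inr {W : ℕ} (A₁ A₂ C D : Matrix (Fin W) (Fin W) ℂ)
    (i : Fin W) (z : ℂ) :
    Matrix.fromBlocks A₁ C D A₂ - z • Matrix.single (Sum.inr i) (Sum.inr i) 1
      = Matrix.fromBlocks A₁ C D (A₂ - z • Matrix.single i i 1) := by
  ext p q
  rcases p with p | p <;> rcases q with q | q <;>
    simp [Matrix.sub_apply, Matrix.smul_apply, Matrix.single, Matrix.of_apply]

lemma measurable_fromBlocks {α : Type*} [MeasurableSpace α] {W : ℕ}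
    {F1 F2 F3 F4 : α → Matrix (Fin W) (Fin W) ℂ}
    (h1 : Measurable F1) (h2 : Measurable F2) (h3 : Measurable F3) (h4 : Measurable F4) :
    Measurable fun x => Matrix.fromBlocks (F1 x) (F2 x) (F3 x) (F4 x) := by
  apply measurable_pi_lambda
  intro p
  apply measurable_pi_lambda
  intro q
  rcases p with p | p <;> rcases q with q | q <;>
    simp only [Matrix.fromBlocks_apply₁₁, Matrix.fromBlocks_apply₁₂,
      Matrix.fromBlocks_apply₂₁, Matrix.fromBlocks_apply₂₂]
  · exact (measurable_pi_apply q).comp ((measurable_pi_apply p).comp h1)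
  · exact (measurable_pi_apply q).comp ((measurable_pi_apply p).comp h2)
  · exact (measurable_pi_apply q).comp ((measurable_pi_apply p).comp h3)
  · exact (measurable_pi_apply q).comp ((measurable_pi_apply p).comp h4)

-- law domination
lemma law_le_of_density {Ω : Type*} [MeasureSpace Ω] {X : Ω → ℝ} {h : ℝ → ℝ} {Ch : ℝ}
    (hmap : Measure.map X ℙ = (volume : Measure ℝ).withDensity (fun x => ENNReal.ofReal (h x)))
    (hCh : ∀ᵐ x ∂(volume : Measure ℝ), h x ≤ Ch) :
    Measure.map X ℙ ≤ ENNReal.ofReal Ch • (volume : Measure ℝ) := by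
  rw [hmap]
  rw [Measure.le_iff]
  intro s hs
  rw [MeasureTheory.withDensity_apply _ hs, Measure.smul_apply, smul_eq_mul]
  calc ∫⁻ x in s, ENNReal.ofReal (h x) ∂volume
      ≤ ∫⁻ _ in s, ENNReal.ofReal Ch ∂volume := by
        apply lintegral_mono_ae
        filter_upwards [ae_restrict_of_ae hCh] with x hx
        exact ENNReal.ofReal_le_ofReal hx
    _ = ENNReal.ofReal Ch * volume s := by
        rw [MeasureTheory.setLIntegral_const]

lemma Ch_nonneg {h : ℝ → ℝ} {Ch : ℝ} (hh0 : ∀ x, 0 ≤ h x)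
    (hCh : ∀ᵐ x ∂(volume : Measure ℝ), h x ≤ Ch) : 0 ≤ Ch := by
  by_contra hneg
  push_neg at hneg
  have hfalse : ∀ᵐ x ∂(volume : Measure ℝ), False := by
    filter_upwards [hCh] with x hx
    exact absurd (le_trans (hh0 x) hx) (not_le.mpr hneg)
  have hvol : (volume : Measure ℝ) ≠ 0 := by
    intro h0
    have := congrArg (fun μ : Measure ℝ => μ (Set.Icc 0 1)) h0
    simp [Real.volume_Icc] at this
  haveI : (MeasureTheory.ae (volume : Measure ℝ)).NeBot := ae_neBot.mpr hvol
  obtain ⟨x, hx⟩ := hfalse.exists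
  exact hx

lemma indep_zeroed {Ω : Type} [MeasureSpace Ω] {d : ℕ → Ω → ℝ} {a : ℕ → ℕ → Ω → ℂ}
    {h : ℝ → ℝ} {g : ℂ → ℝ} (hw : WignerHyp Ω d a h g) (W : ℕ) (i : Fin W) :
    IndepFun (fun ω => wignerMatrix W (Function.update (fun k => d k ω) (i : ℕ) 0)
        (fun p q => a p q ω)) (d (i : ℕ)) ℙ := by
  classical
  set F : (ℕ ⊕ (ℕ × ℕ)) → Ω → ℂ :=
    fun k => Sum.elim (fun j ω => ((d j ω : ℝ) : ℂ)) (fun p ω => a p.1 p.2 ω) k with hFdef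
  have hiid : iIndepFun F ℙ := hw.2.2.2.2.2.2.2
  have hFmeas : ∀ k, Measurable (F k) := by
    intro k
    rcases k with j | p
    · exact Complex.measurable_ofReal.comp (hw.1 j)
    · exact hw.2.1 p.1 p.2
  set T : Finset (ℕ ⊕ (ℕ × ℕ)) :=
    (((Finset.range W).image Sum.inl).erase (Sum.inl (i : ℕ)))
      ∪ ((Finset.range W ×ˢ Finset.range W).image Sum.inr) with hTdef
  set S : Finset (ℕ ⊕ (ℕ × ℕ)) := {Sum.inl (i : ℕ)} with hSdef
  have hmemInl : ∀ k : ℕ, (Sum.inl k ∈ T) ↔ (k < W ∧ k ≠ (i : ℕ)) := by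
    intro k
    simp only [hTdef, Finset.mem_union, Finset.mem_erase, Finset.mem_image,
      Finset.mem_range, Finset.mem_product]
    constructor
    · rintro (⟨hne, m, hm, hmk⟩ | ⟨p, _, hpk⟩)
      · cases hmk
        exact ⟨hm, fun hc => hne (by rw [hc])⟩
      · exact absurd hpk (by simp)
    · intro ⟨hkW, hki⟩
      exact Or.inl ⟨by simpa using hki, k, hkW, rfl⟩
  have hmemInr : ∀ p q : ℕ, (Sum.inr (p, q) ∈ T) ↔ (p < W ∧ q < W) := by
    intro p q
    simp only [hTdef, Finset.mem_union, Finset.mem_erase, Finset.mem_image,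
      Finset.mem_range, Finset.mem_product]
    constructor
    · rintro (⟨_, m, _, hmk⟩ | ⟨⟨p', q'⟩, hpq, heq⟩)
      · exact absurd hmk (by simp)
      · cases heq
        exact hpq
    · intro hpq
      exact Or.inr ⟨(p, q), hpq, rfl⟩
  have hiS : Sum.inl (i : ℕ) ∈ S := by simp [hSdef]
  have hdisj : Disjoint T S := by
    rw [Finset.disjoint_right]
    intro x hxS hxT
    rw [hSdef, Finset.mem_singleton] at hxS
    subst hxS
    rw [hmemInl] at hxT
    exact hxT.2 rfl
  have hind0 := hiid.indepFun_finset T S hdisj hFmeas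
  set ρ : ({x // x ∈ T} → ℂ) → (ℕ → ℝ) × (ℕ → ℕ → ℂ) := fun v =>
    (fun k => if hk : (Sum.inl k) ∈ T then (v ⟨Sum.inl k, hk⟩).re else 0,
     fun p q => if hpq : (Sum.inr (p, q)) ∈ T then v ⟨Sum.inr (p, q), hpq⟩ else 0) with hρdef
  have hρmeas : Measurable ρ := by
    apply Measurable.prodMk
    · apply measurable_pi_lambda
      intro k
      by_cases hk : (Sum.inl k) ∈ T
      · simp only [hρdef, dif_pos hk]
        exact Complex.measurable_re.comp (measurable_pi_apply _)
      · simp only [hρdef, dif_neg hk]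
        exact measurable_const
    · apply measurable_pi_lambda
      intro p
      apply measurable_pi_lambda
      intro q
      by_cases hpq : (Sum.inr (p, q)) ∈ T
      · simp only [hρdef, dif_pos hpq]
        exact measurable_pi_apply _
      · simp only [hρdef, dif_neg hpq]
        exact measurable_const
  set φ : ({x // x ∈ T} → ℂ) → Matrix (Fin W) (Fin W) ℂ :=
    (fun pr : (ℕ → ℝ) × (ℕ → ℕ → ℂ) => wignerMatrix W pr.1 pr.2) ∘ ρ with hφdef
  have hφmeas : Measurable φ := (measurable_wigner_pack W).comp hρmeas
  set ψ : ({x // x ∈ S} → ℂ) → ℝ := fun v => (v ⟨Sum.inl (i : ℕ), hiS⟩).re with hψdef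
  have hψmeas : Measurable ψ := Complex.measurable_re.comp (measurable_pi_apply _)
  have hcomp := hind0.comp hφmeas hψmeas
  have h1 : (φ ∘ fun ω (j : {x // x ∈ T}) => F j ω)
      = fun ω => wignerMatrix W (Function.update (fun k => d k ω) (i : ℕ) 0)
          (fun p q => a p q ω) := by
    funext ω
    simp only [Function.comp_apply, hφdef, hρdef]
    apply wigner_congr
    · intro k hk
      by_cases hki : k = (i : ℕ)
      · rw [dif_neg (fun hmem => ((hmemInl k).mp hmem).2 hki), hki, Function.update_self]
      · rw [dif_pos ((hmemInl k).mpr ⟨hk, hki⟩), Function.update_of_ne hki]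
        exact Complex.ofReal_re _
    · intro p hp q hq
      rw [dif_pos ((hmemInr p q).mpr ⟨hp, hq⟩)]
      rfl
  have h2 : (ψ ∘ fun ω (j : {x // x ∈ S}) => F j ω) = d (i : ℕ) := by
    funext ω
    simp only [Function.comp_apply, hψdef]
    exact Complex.ofReal_re _
  rw [h1, h2] at hcomp
  exact hcomp

-- additional helpers
lemma measurable_matrix_sub_const {α : Type*} [MeasurableSpace α] {n : Type*} [Fintype n]
    [DecidableEq n] {F : α → Matrix n n ℂ} (hF : Measurable F) (A : Matrix n n ℂ) :
    Measurable fun x => F x - A := by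
  apply measurable_matrix_of_entries
  intro p q
  have : (fun x => (F x - A) p q) = fun x => F x p q - A p q := by
    funext x; rw [Matrix.sub_apply]
  rw [this]
  exact (measurable_matrix_entry hF p q).sub measurable_const

lemma measurable_shiftM {α : Type*} [MeasurableSpace α] {n : Type*} [Fintype n]
    [DecidableEq n] {F : α → Matrix n n ℂ} (hF : Measurable F) (ε : ℝ) :
    Measurable fun x => shiftM ε (F x) := by
  apply measurable_matrix_of_entries
  intro p q
  have : (fun x => shiftM ε (F x) p q)
      = fun x => F x p q - (((ε : ℂ) * Complex.I) • (1 : Matrix n n ℂ)) p q := by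
    funext x; rw [shiftM, Matrix.sub_apply]
  rw [this]
  exact (measurable_matrix_entry hF p q).sub measurable_const

/-- Wegner estimate for Wigner blocks. -/
theorem wigner_block_wegner
    (W : ℕ) (hW : 1 ≤ W)
    (Ω : Type) [MeasureSpace Ω] [IsProbabilityMeasure (ℙ : Measure Ω)]
    (h : ℝ → ℝ) (g : ℂ → ℝ) (hh0 : ∀ x, 0 ≤ h x) (hg0 : ∀ z, 0 ≤ g z)
    (hgbdd : ∃ Cg : ℝ, ∀ z, g z ≤ Cg)
    (Ch : ℝ) (hCh : ∀ᵐ x ∂(volume : Measure ℝ), h x ≤ Ch)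
    (d d' : ℕ → Ω → ℝ) (a a' : ℕ → ℕ → Ω → ℂ)
    (hw : WignerHyp Ω d a h g) (hw' : WignerHyp Ω d' a' h g)
    -- the two Wigner matrices are independent
    (hpairindep : IndepFun
      (fun ω => ((fun k => d k ω), (fun i j => a i j ω)))
      (fun ω => ((fun k => d' k ω), (fun i j => a' i j ω))) ℙ) :
    -- single-block Wegner estimate
    (∀ A : Matrix (Fin W) (Fin W) ℂ, A.IsHermitian → ∀ t : ℝ, 0 < t →
      (ℙ : Measure Ω) {ω |
          invNormGT (wignerMatrix W (fun k => d k ω) (fun p q => a p q ω) - A)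
            (t * (W : ℝ) ^ ((3 : ℝ) / 2))}
        ≤ ENNReal.ofReal (2 * Real.pi * Ch / t)) ∧
    -- two-block Wegner estimate
    (∀ A B : Matrix (Fin W) (Fin W) ℂ, A.IsHermitian → B.IsHermitian →
      ∀ C : Matrix (Fin W) (Fin W) ℂ, ∀ t : ℝ, 0 < t →
      (ℙ : Measure Ω) {ω |
          invNormGT
            (Matrix.fromBlocks
              (wignerMatrix W (fun k => d k ω) (fun p q => a p q ω) - A) C Cᴴ
              (wignerMatrix W (fun k => d' k ω) (fun p q => a' p q ω) - B))
            (t * (W : ℝ) ^ ((3 : ℝ) / 2))}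
        ≤ ENNReal.ofReal (4 * Real.pi * Ch / t)) := by
  have hWpos : (0:ℝ) < (W:ℝ) := by
    have : 0 < W := lt_of_lt_of_le Nat.zero_lt_one hW
    exact_mod_cast this
  have hs : 0 < Real.sqrt (W:ℝ) := Real.sqrt_pos.mpr hWpos
  have hCh0 : 0 ≤ Ch := Ch_nonneg hh0 hCh
  have hrpow : (W:ℝ) ^ ((3:ℝ)/2) = (W:ℝ) * Real.sqrt (W:ℝ) := by
    rw [Real.sqrt_eq_rpow]
    rw [show ((3:ℝ)/2) = 1 + 1/2 by norm_num, Real.rpow_add hWpos, Real.rpow_one]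
  haveI : Nonempty (Fin W) := ⟨⟨0, hW⟩⟩
  have hpack1 : Measurable (fun ω => ((fun k => d k ω), (fun i j => a i j ω))) :=
    (measurable_pi_lambda _ fun k => hw.1 k).prodMk
      (measurable_pi_lambda _ fun p => measurable_pi_lambda _ fun q => hw.2.1 p q)
  have hpack2 : Measurable (fun ω => ((fun k => d' k ω), (fun i j => a' i j ω))) :=
    (measurable_pi_lambda _ fun k => hw'.1 k).prodMk
      (measurable_pi_lambda _ fun p => measurable_pi_lambda _ fun q => hw'.2.1 p q)
  have hzm : ∀ i : Fin W, Measurable (fun ω => wignerMatrix W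
      (Function.update (fun k => d k ω) (i : ℕ) 0) (fun p q => a p q ω)) := by
    intro i
    have hp : Measurable (fun ω =>
        (Function.update (fun k => d k ω) (i : ℕ) 0, fun p q => a p q ω)) := by
      apply Measurable.prodMk
      · apply measurable_pi_lambda
        intro k
        by_cases hk : k = (i : ℕ)
        · simp only [Function.update_apply, if_pos hk]
          exact measurable_const
        · simp only [Function.update_apply, if_neg hk]
          exact hw.1 k
      · exact measurable_pi_lambda _ fun p => measurable_pi_lambda _ fun q => hw.2.1 p q
    exact (measurable_wigner_pack W).comp hp
  have hzm' : ∀ i : Fin W, Measurable (fun ω => wignerMatrix W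
      (Function.update (fun k => d' k ω) (i : ℕ) 0) (fun p q => a' p q ω)) := by
    intro i
    have hp : Measurable (fun ω =>
        (Function.update (fun k => d' k ω) (i : ℕ) 0, fun p q => a' p q ω)) := by
      apply Measurable.prodMk
      · apply measurable_pi_lambda
        intro k
        by_cases hk : k = (i : ℕ)
        · simp only [Function.update_apply, if_pos hk]
          exact measurable_const
        · simp only [Function.update_apply, if_neg hk]
          exact hw'.1 k
      · exact measurable_pi_lambda _ fun p => measurable_pi_lambda _ fun q => hw'.2.1 p q
    exact (measurable_wigner_pack W).comp hp
  constructor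
  · -- single block
    intro A hA t ht
    have hc : 0 < t * (W:ℝ) ^ ((3:ℝ)/2) := by
      rw [hrpow]; positivity
    have hMmeas : Measurable (fun ω =>
        wignerMatrix W (fun k => d k ω) (fun p q => a p q ω) - A) :=
      measurable_matrix_sub_const ((measurable_wigner_pack W).comp hpack1) A
    have hMherm : ∀ ω, (wignerMatrix W (fun k => d k ω) (fun p q => a p q ω)
        - A).IsHermitian := fun ω => (wigner_isHermitian W _ _).sub hA
    have hper : ∀ i : Fin W,
        ∫⁻ ω, ENNReal.ofReal ((((shiftM (1/(t * (W:ℝ) ^ ((3:ℝ)/2)))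
            ((fun ω => wignerMatrix W (fun k => d k ω) (fun p q => a p q ω) - A) ω))⁻¹) i i).im) ∂ℙ
          ≤ ENNReal.ofReal (Ch * (Real.pi * Real.sqrt (W:ℝ))) := by
      intro i
      have hYeq : (fun ω => (wignerMatrix W (fun k => d k ω) (fun p q => a p q ω) - A)
            - ((d (i:ℕ) ω : ℂ) / ((Real.sqrt (W:ℝ) : ℝ) : ℂ)) • Matrix.single i i 1)
          = (fun m => m - A) ∘ (fun ω => wignerMatrix W
              (Function.update (fun k => d k ω) (i : ℕ) 0) (fun p q => a p q ω)) := by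
        funext ω
        simp only [Function.comp_apply]
        rw [sub_right_comm]
        rw [wigner_zeroed W (fun k => d k ω) (fun p q => a p q ω) i]
      exact perIndex (s := Real.sqrt (W:ℝ)) (ε := 1/(t * (W:ℝ) ^ ((3:ℝ)/2))) (Ch := Ch)
        (fun ω => wignerMatrix W (fun k => d k ω) (fun p q => a p q ω) - A) hMherm i
        hs (by positivity) hCh0 (d (i:ℕ)) (hw.1 _)
        (law_le_of_density (hw.2.2.1 (i:ℕ)) hCh)
        (by rw [hYeq]
            exact (measurable_matrix_sub_const measurable_id A).comp (hzm i))
        (by rw [hYeq]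
            exact (indep_zeroed hw W i).comp (measurable_matrix_sub_const measurable_id A)
              measurable_id)
    have habs := wegner_abstract (c := t * (W:ℝ) ^ ((3:ℝ)/2))
      (fun ω => wignerMatrix W (fun k => d k ω) (fun p q => a p q ω) - A)
      hMmeas hMherm hs hCh0 hc hper
    refine habs.trans (le_of_eq ?_)
    congr 1
    rw [Fintype.card_fin, hrpow]
    have hsne : Real.sqrt (W:ℝ) ≠ 0 := hs.ne'
    field_simp
  · -- two blocks
    intro A B hA hB C t ht
    have hc : 0 < t * (W:ℝ) ^ ((3:ℝ)/2) := by
      rw [hrpow]; positivity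
    haveI : Nonempty (Fin W ⊕ Fin W) := ⟨Sum.inl ⟨0, hW⟩⟩
    set M₂ : Ω → Matrix (Fin W ⊕ Fin W) (Fin W ⊕ Fin W) ℂ := fun ω =>
      Matrix.fromBlocks
        (wignerMatrix W (fun k => d k ω) (fun p q => a p q ω) - A) C Cᴴ
        (wignerMatrix W (fun k => d' k ω) (fun p q => a' p q ω) - B) with hM₂def
    have hM₂meas : Measurable M₂ := by
      apply measurable_fromBlocks
      · exact measurable_matrix_sub_const ((measurable_wigner_pack W).comp hpack1) A
      · exact measurable_const
      · exact measurable_const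
      · exact measurable_matrix_sub_const ((measurable_wigner_pack W).comp hpack2) B
    have hM₂herm : ∀ ω, (M₂ ω).IsHermitian := fun ω =>
      fromBlocks_herm ((wigner_isHermitian W _ _).sub hA) ((wigner_isHermitian W _ _).sub hB) C
    have hper : ∀ i : Fin W ⊕ Fin W,
        ∫⁻ ω, ENNReal.ofReal ((((shiftM (1/(t * (W:ℝ) ^ ((3:ℝ)/2))) (M₂ ω))⁻¹) i i).im) ∂ℙ
          ≤ ENNReal.ofReal (Ch * (Real.pi * Real.sqrt (W:ℝ))) := by
      intro i
      rcases i with i₀ | i₀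
      · -- index in the first block
        refine freeze (fun ω => ((fun k => d k ω), (fun i j => a i j ω)))
          (fun ω => ((fun k => d' k ω), (fun i j => a' i j ω))) hpack1 hpack2 hpairindep
          (fun pr : ((ℕ → ℝ) × (ℕ → ℕ → ℂ)) × ((ℕ → ℝ) × (ℕ → ℕ → ℂ)) =>
            ENNReal.ofReal ((((shiftM (1/(t * (W:ℝ) ^ ((3:ℝ)/2)))
            (Matrix.fromBlocks (wignerMatrix W pr.1.1 pr.1.2 - A) C Cᴴ
              (wignerMatrix W pr.2.1 pr.2.2 - B)))⁻¹) (Sum.inl i₀) (Sum.inl i₀)).im))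
          ?_ _ ?_
        · apply ENNReal.measurable_ofReal.comp
          apply Complex.measurable_im.comp
          apply measurable_matrix_entry (measurable_matrix_inv (measurable_shiftM ?_ _))
          apply measurable_fromBlocks
          · exact measurable_matrix_sub_const
              ((measurable_wigner_pack W).comp measurable_fst) A
          · exact measurable_const
          · exact measurable_const
          · exact measurable_matrix_sub_const
              ((measurable_wigner_pack W).comp measurable_snd) B
        · intro c2
          have hYeq : (fun ω => (Matrix.fromBlocks
                (wignerMatrix W (fun k => d k ω) (fun p q => a p q ω) - A) C Cᴴ
                (wignerMatrix W c2.1 c2.2 - B))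
              - ((d (i₀:ℕ) ω : ℂ) / ((Real.sqrt (W:ℝ) : ℝ) : ℂ))
                • Matrix.single (Sum.inl i₀) (Sum.inl i₀) 1)
              = (fun m => Matrix.fromBlocks (m - A) C Cᴴ (wignerMatrix W c2.1 c2.2 - B))
                ∘ (fun ω => wignerMatrix W
                  (Function.update (fun k => d k ω) (i₀ : ℕ) 0) (fun p q => a p q ω)) := by
            funext ω
            simp only [Function.comp_apply]
            rw [fromBlocks_sub_std_inl]
            rw [sub_right_comm]
            rw [wigner_zeroed W (fun k => d k ω) (fun p q => a p q ω) i₀]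
          have hGmeas : Measurable (fun m : Matrix (Fin W) (Fin W) ℂ =>
              Matrix.fromBlocks (m - A) C Cᴴ (wignerMatrix W c2.1 c2.2 - B)) := by
            apply measurable_fromBlocks
            · exact measurable_matrix_sub_const measurable_id A
            · exact measurable_const
            · exact measurable_const
            · exact measurable_const
          exact perIndex (s := Real.sqrt (W:ℝ)) (ε := 1/(t * (W:ℝ) ^ ((3:ℝ)/2))) (Ch := Ch)
            (fun ω => Matrix.fromBlocks
              (wignerMatrix W (fun k => d k ω) (fun p q => a p q ω) - A) C Cᴴ
              (wignerMatrix W c2.1 c2.2 - B))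
            (fun ω => fromBlocks_herm ((wigner_isHermitian W _ _).sub hA)
              ((wigner_isHermitian W _ _).sub hB) C)
            (Sum.inl i₀) hs (by positivity) hCh0 (d (i₀:ℕ)) (hw.1 _)
            (law_le_of_density (hw.2.2.1 (i₀:ℕ)) hCh)
            (by rw [hYeq]; exact hGmeas.comp (hzm i₀))
            (by rw [hYeq]
                exact (indep_zeroed hw W i₀).comp hGmeas measurable_id)
      · -- index in the second block
        refine freeze (fun ω => ((fun k => d' k ω), (fun i j => a' i j ω)))
          (fun ω => ((fun k => d k ω), (fun i j => a i j ω))) hpack2 hpack1 hpairindep.symm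
          (fun pr : ((ℕ → ℝ) × (ℕ → ℕ → ℂ)) × ((ℕ → ℝ) × (ℕ → ℕ → ℂ)) =>
            ENNReal.ofReal ((((shiftM (1/(t * (W:ℝ) ^ ((3:ℝ)/2)))
            (Matrix.fromBlocks (wignerMatrix W pr.2.1 pr.2.2 - A) C Cᴴ
              (wignerMatrix W pr.1.1 pr.1.2 - B)))⁻¹) (Sum.inr i₀) (Sum.inr i₀)).im))
          ?_ _ ?_
        · apply ENNReal.measurable_ofReal.comp
          apply Complex.measurable_im.comp
          apply measurable_matrix_entry (measurable_matrix_inv (measurable_shiftM ?_ _))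
          apply measurable_fromBlocks
          · exact measurable_matrix_sub_const
              ((measurable_wigner_pack W).comp measurable_snd) A
          · exact measurable_const
          · exact measurable_const
          · exact measurable_matrix_sub_const
              ((measurable_wigner_pack W).comp measurable_fst) B
        · intro c1
          have hYeq : (fun ω => (Matrix.fromBlocks
                (wignerMatrix W c1.1 c1.2 - A) C Cᴴ
                (wignerMatrix W (fun k => d' k ω) (fun p q => a' p q ω) - B))
              - ((d' (i₀:ℕ) ω : ℂ) / ((Real.sqrt (W:ℝ) : ℝ) : ℂ))
                • Matrix.single (Sum.inr i₀) (Sum.inr i₀) 1)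
              = (fun m => Matrix.fromBlocks (wignerMatrix W c1.1 c1.2 - A) C Cᴴ (m - B))
                ∘ (fun ω => wignerMatrix W
                  (Function.update (fun k => d' k ω) (i₀ : ℕ) 0) (fun p q => a' p q ω)) := by
            funext ω
            simp only [Function.comp_apply]
            rw [fromBlocks_sub_std_inr]
            rw [sub_right_comm]
            rw [wigner_zeroed W (fun k => d' k ω) (fun p q => a' p q ω) i₀]
          have hGmeas : Measurable (fun m : Matrix (Fin W) (Fin W) ℂ =>
              Matrix.fromBlocks (wignerMatrix W c1.1 c1.2 - A) C Cᴴ (m - B)) := by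
            apply measurable_fromBlocks
            · exact measurable_const
            · exact measurable_const
            · exact measurable_const
            · exact measurable_matrix_sub_const measurable_id B
          exact perIndex (s := Real.sqrt (W:ℝ)) (ε := 1/(t * (W:ℝ) ^ ((3:ℝ)/2))) (Ch := Ch)
            (fun ω => Matrix.fromBlocks (wignerMatrix W c1.1 c1.2 - A) C Cᴴ
              (wignerMatrix W (fun k => d' k ω) (fun p q => a' p q ω) - B))
            (fun ω => fromBlocks_herm ((wigner_isHermitian W _ _).sub hA)
              ((wigner_isHermitian W _ _).sub hB) C)
            (Sum.inr i₀) hs (by positivity) hCh0 (d' (i₀:ℕ)) (hw'.1 _)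
            (law_le_of_density (hw'.2.2.1 (i₀:ℕ)) hCh)
            (by rw [hYeq]; exact hGmeas.comp (hzm' i₀))
            (by rw [hYeq]
                exact (indep_zeroed hw' W i₀).comp hGmeas measurable_id)
    have habs := wegner_abstract (c := t * (W:ℝ) ^ ((3:ℝ)/2)) M₂ hM₂meas hM₂herm hs hCh0 hc hper
    refine habs.trans (le_of_eq ?_)
    congr 1
    rw [show Fintype.card (Fin W ⊕ Fin W) = W + W by
      rw [Fintype.card_sum, Fintype.card_fin]]
    rw [hrpow]
    have hsne : Real.sqrt (W:ℝ) ≠ 0 := hs.ne'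
    push_cast
    field_simp
    ring
end

section
/- Fluctuation regularity for Hölder log-densities: let α ∈ (0,1], C < ∞, and let h: ℝ → (0,∞) and g: ℂ → (0,∞) be probability densities such that ln h and ln g are uniformly Hölder continuous with exponent α and constant C (i.e., |ln h(x) - ln h(y)| ≤ C|x-y|^α and similarly for g). For a complex Hermitian W×W matrix V write d_i = √W·V(i,i) and a_{i,j} = √W·V(i,j) for i < j, and set ρ(V) = ∏_{i=1}^W h(d_i) · ∏_{1 ≤ i < j ≤ W} g(a_{i,j}). Let ζ = 2/α + 1/2. Then for every ε > 0 and all Hermitian W×W matrices V, V₁, V₂ with ‖V₁ - V‖ ≤ ε·W^{-ζ} and ‖V₂ - V‖ ≤ ε·W^{-ζ}: ρ(V₁)/ρ(V₂) ≥ exp(-c·ε^α), where c = 2^{1+α}·C. -/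
open Matrix

/-- The product density `ρ(V) = ∏ᵢ h(dᵢ) ∏_{i<j} g(a_{ij})` of a Wigner-type matrix,
written in the rescaled entries `dᵢ = √W V(i,i)` and `a_{ij} = √W V(i,j)`. -/
noncomputable def wignerDensity (W : ℕ) (h : ℝ → ℝ) (g : ℂ → ℝ)
    (V : Matrix (Fin W) (Fin W) ℂ) : ℝ :=
  (∏ i : Fin W, h (Real.sqrt W * (V i i).re)) *
    ∏ p ∈ Finset.univ.filter (fun p : Fin W × Fin W => p.1 < p.2),
      g ((Real.sqrt W : ℂ) * V p.1 p.2)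

lemma entry_le_opNorm {m : Type*} [Fintype m] [DecidableEq m] (M : Matrix m m ℂ) (i j : m) :
    ‖M i j‖ ≤ opNorm M := by
  set T := (Matrix.toEuclideanCLM (𝕜 := ℂ) M : EuclideanSpace ℂ m →L[ℂ] EuclideanSpace ℂ m)
  set x : EuclideanSpace ℂ m := EuclideanSpace.single j 1 with hxdef
  have hx : ‖x‖ = 1 := by simp [hxdef]
  have hentry : (T x) i = M i j := by
    show (Matrix.toLin' M (Pi.single j 1)) i = M i j
    rw [Matrix.toLin'_apply, Matrix.mulVec_single]; simp
  have h2 : ‖(T x) i‖ ≤ ‖T x‖ := by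
    have := @norm_inner_le_norm ℂ _ _ _ _ (EuclideanSpace.single i (1:ℂ)) (T x)
    rw [EuclideanSpace.inner_single_left] at this
    simpa using this
  have h3 : ‖T x‖ ≤ ‖T‖ * ‖x‖ := T.le_opNorm x
  rw [hx, mul_one] at h3
  rw [← hentry]; exact h2.trans h3

lemma opNorm_sub_le' {m : Type*} [Fintype m] [DecidableEq m] (A B C : Matrix m m ℂ) :
    opNorm (A - B) ≤ opNorm (A - C) + opNorm (B - C) := by
  have e : A - B = (A - C) - (B - C) := by abel
  unfold opNorm
  rw [e, map_sub]
  exact norm_sub_le _ _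

/-- Fluctuation regularity for Hölder log-densities: if `ln h` and `ln g`
are uniformly `α`-Hölder with constant `C` and `ζ = 2/α + 1/2`, then for Hermitian
matrices `V₁, V₂` within distance `ε W^{-ζ}` of `V`, the density ratio satisfies
`ρ(V₁)/ρ(V₂) ≥ exp(-2^{1+α} C ε^α)`. -/
theorem holder_density_fluctuation_regular
    (α C : ℝ) (hα : 0 < α) (hα1 : α ≤ 1) (hC : 0 ≤ C)
    (h : ℝ → ℝ) (g : ℂ → ℝ) (hh : ∀ x, 0 < h x) (hg : ∀ z, 0 < g z)
    (hHolh : ∀ x y : ℝ, |Real.log (h x) - Real.log (h y)| ≤ C * |x - y| ^ α)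
    (hHolg : ∀ z w : ℂ, |Real.log (g z) - Real.log (g w)| ≤ C * ‖z - w‖ ^ α)
    (W : ℕ) (hW : 1 ≤ W) (ε : ℝ) (hε : 0 < ε)
    (V V₁ V₂ : Matrix (Fin W) (Fin W) ℂ)
    (hV : V.IsHermitian) (hV₁ : V₁.IsHermitian) (hV₂ : V₂.IsHermitian)
    (h₁ : opNorm (V₁ - V) ≤ ε * (W : ℝ) ^ (-(2 / α + 1 / 2)))
    (h₂ : opNorm (V₂ - V) ≤ ε * (W : ℝ) ^ (-(2 / α + 1 / 2))) :
    Real.exp (-((2 : ℝ) ^ (1 + α) * C) * ε ^ α)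
      ≤ wignerDensity W h g V₁ / wignerDensity W h g V₂ := by
  have hWpos : (0:ℝ) < W := by exact_mod_cast hW
  set δ : ℝ := ε * (W : ℝ) ^ (-(2 / α + 1 / 2)) with hδdef
  have hδpos : 0 < δ := by positivity
  set K : ℝ := C * ((2:ℝ) ^ α * ε ^ α * (W:ℝ) ^ (-(2:ℝ))) with hKdef
  have hKnonneg : 0 ≤ K := by
    apply mul_nonneg hC; positivity
  -- entrywise bound
  have hB : ∀ i j : Fin W, ‖V₂ i j - V₁ i j‖ ≤ 2 * δ := by
    intro i j
    have e1 : ‖V₂ i j - V₁ i j‖ = ‖(V₂ - V₁) i j‖ := by simp [Matrix.sub_apply]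
    rw [e1]
    refine (entry_le_opNorm _ i j).trans ?_
    refine (opNorm_sub_le' V₂ V₁ V).trans ?_
    calc opNorm (V₂ - V) + opNorm (V₁ - V) ≤ δ + δ := add_le_add h₂ h₁
      _ = 2 * δ := by ring
  -- the power computation
  have hsqrtW : Real.sqrt W = (W:ℝ) ^ ((1:ℝ)/2) := Real.sqrt_eq_rpow _
  have hsqrtnn : 0 ≤ Real.sqrt W := Real.sqrt_nonneg _
  have hpow : (Real.sqrt W * (2 * δ)) ^ α = (2:ℝ) ^ α * ε ^ α * (W:ℝ) ^ (-(2:ℝ)) := by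
    have e1 : Real.sqrt W * (2 * δ) = 2 * ε * (W:ℝ) ^ (-(2/α) : ℝ) := by
      rw [hsqrtW, hδdef]
      rw [show (W:ℝ) ^ ((1:ℝ)/2) * (2 * (ε * (W:ℝ) ^ (-(2 / α + 1 / 2)))) =
          2 * ε * ((W:ℝ) ^ ((1:ℝ)/2) * (W:ℝ) ^ (-(2 / α + 1 / 2))) from by ring]
      rw [← Real.rpow_add hWpos]
      norm_num
    rw [e1, Real.mul_rpow (by positivity) (by positivity),
        Real.mul_rpow (by norm_num) hε.le, ← Real.rpow_mul hWpos.le]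
    have e2 : (-(2/α))*α = (-2 : ℝ) := by field_simp
    rw [e2]
  -- per-term bounds
  have hterm_d : ∀ i : Fin W,
      Real.log (h (Real.sqrt W * (V₂ i i).re)) - Real.log (h (Real.sqrt W * (V₁ i i).re)) ≤ K := by
    intro i
    refine (le_abs_self _).trans ?_
    refine (hHolh _ _).trans ?_
    rw [hKdef, ← hpow]
    apply mul_le_mul_of_nonneg_left _ hC
    apply Real.rpow_le_rpow (abs_nonneg _) _ hα.le
    have e : Real.sqrt W * (V₂ i i).re - Real.sqrt W * (V₁ i i).re
        = Real.sqrt W * ((V₂ i i - V₁ i i).re) := by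
      simp [Complex.sub_re]; ring
    rw [e, abs_mul, abs_of_nonneg hsqrtnn]
    apply mul_le_mul_of_nonneg_left _ hsqrtnn
    exact (Complex.abs_re_le_norm _).trans (hB i i)
  have hterm_o : ∀ p : Fin W × Fin W,
      Real.log (g ((Real.sqrt W : ℂ) * V₂ p.1 p.2)) -
        Real.log (g ((Real.sqrt W : ℂ) * V₁ p.1 p.2)) ≤ K := by
    intro p
    refine (le_abs_self _).trans ?_
    refine (hHolg _ _).trans ?_
    rw [hKdef, ← hpow]
    apply mul_le_mul_of_nonneg_left _ hC
    apply Real.rpow_le_rpow (norm_nonneg _) _ hα.le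
    have e : (Real.sqrt W : ℂ) * V₂ p.1 p.2 - (Real.sqrt W : ℂ) * V₁ p.1 p.2
        = (Real.sqrt W : ℂ) * (V₂ p.1 p.2 - V₁ p.1 p.2) := by ring
    rw [e, norm_mul, Complex.norm_real, Real.norm_eq_abs, abs_of_nonneg hsqrtnn]
    exact mul_le_mul_of_nonneg_left (hB p.1 p.2) hsqrtnn
  -- positivity of densities
  have hρpos : ∀ Vx : Matrix (Fin W) (Fin W) ℂ, 0 < wignerDensity W h g Vx := by
    intro Vx
    unfold wignerDensity
    apply mul_pos
    · exact Finset.prod_pos (fun i _ => hh _)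
    · exact Finset.prod_pos (fun p _ => hg _)
  -- log of density
  have hlog : ∀ Vx : Matrix (Fin W) (Fin W) ℂ,
      Real.log (wignerDensity W h g Vx) =
        (∑ i : Fin W, Real.log (h (Real.sqrt W * (Vx i i).re))) +
          ∑ p ∈ Finset.univ.filter (fun p : Fin W × Fin W => p.1 < p.2),
            Real.log (g ((Real.sqrt W : ℂ) * Vx p.1 p.2)) := by
    intro Vx
    unfold wignerDensity
    rw [Real.log_mul (Finset.prod_pos (fun i _ => hh _)).ne'
        (Finset.prod_pos (fun p _ => hg _)).ne',
      Real.log_prod (fun i _ => (hh _).ne'),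
      Real.log_prod (fun p _ => (hg _).ne')]
  set F := Finset.univ.filter (fun p : Fin W × Fin W => p.1 < p.2) with hF
  have hFcard : (F.card : ℝ) ≤ (W:ℝ)^2 := by
    have h1 : F.card ≤ (Finset.univ : Finset (Fin W × Fin W)).card := Finset.card_filter_le _ _
    have h2 : (Finset.univ : Finset (Fin W × Fin W)).card = W * W := by
      simp [Finset.card_univ]
    calc (F.card : ℝ) ≤ ((W * W : ℕ) : ℝ) := by exact_mod_cast h2 ▸ h1
      _ = (W:ℝ)^2 := by push_cast; ring
  -- main log estimate
  have key : Real.log (wignerDensity W h g V₂) - Real.log (wignerDensity W h g V₁)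
      ≤ (2:ℝ) ^ (1 + α) * C * ε ^ α := by
    rw [hlog V₂, hlog V₁]
    have e : ((∑ i : Fin W, Real.log (h (Real.sqrt W * (V₂ i i).re))) +
          ∑ p ∈ F, Real.log (g ((Real.sqrt W : ℂ) * V₂ p.1 p.2))) -
        ((∑ i : Fin W, Real.log (h (Real.sqrt W * (V₁ i i).re))) +
          ∑ p ∈ F, Real.log (g ((Real.sqrt W : ℂ) * V₁ p.1 p.2)))
        = (∑ i : Fin W, (Real.log (h (Real.sqrt W * (V₂ i i).re)) -
            Real.log (h (Real.sqrt W * (V₁ i i).re)))) +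
          ∑ p ∈ F, (Real.log (g ((Real.sqrt W : ℂ) * V₂ p.1 p.2)) -
            Real.log (g ((Real.sqrt W : ℂ) * V₁ p.1 p.2))) := by
      rw [Finset.sum_sub_distrib, Finset.sum_sub_distrib]; ring
    rw [e]
    have b1 : (∑ i : Fin W, (Real.log (h (Real.sqrt W * (V₂ i i).re)) -
        Real.log (h (Real.sqrt W * (V₁ i i).re)))) ≤ (W:ℝ) * K := by
      calc _ ≤ ∑ _i : Fin W, K := Finset.sum_le_sum (fun i _ => hterm_d i)
        _ = (W:ℝ) * K := by simp [mul_comm]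
    have b2 : (∑ p ∈ F, (Real.log (g ((Real.sqrt W : ℂ) * V₂ p.1 p.2)) -
        Real.log (g ((Real.sqrt W : ℂ) * V₁ p.1 p.2)))) ≤ (W:ℝ)^2 * K := by
      calc _ ≤ ∑ _p ∈ F, K := Finset.sum_le_sum (fun p _ => hterm_o p)
        _ = (F.card : ℝ) * K := by simp [mul_comm]
        _ ≤ (W:ℝ)^2 * K := mul_le_mul_of_nonneg_right hFcard hKnonneg
    have h1W : (1:ℝ) ≤ (W:ℝ) := by exact_mod_cast hW
    have hWle : (W:ℝ) ≤ (W:ℝ)^2 := by nlinarith [h1W]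
    have hfinal : (W:ℝ) * K + (W:ℝ)^2 * K ≤ (2:ℝ) ^ (1 + α) * C * ε ^ α := by
      have e2 : (W:ℝ)^2 * (W:ℝ) ^ (-(2:ℝ)) = 1 := by
        rw [← Real.rpow_natCast (W:ℝ) 2, ← Real.rpow_add hWpos]
        norm_num
      have e3 : (2:ℝ) ^ (1 + α) = 2 * (2:ℝ) ^ α := by
        rw [Real.rpow_add (by norm_num : (0:ℝ) < 2), Real.rpow_one]
      have : (W:ℝ) * K + (W:ℝ)^2 * K ≤ 2 * ((W:ℝ)^2 * K) := by nlinarith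
      refine this.trans (le_of_eq ?_)
      rw [hKdef, e3]
      calc 2 * ((W:ℝ)^2 * (C * ((2:ℝ) ^ α * ε ^ α * (W:ℝ) ^ (-(2:ℝ)))))
          = 2 * (2:ℝ)^α * C * ε^α * ((W:ℝ)^2 * (W:ℝ) ^ (-(2:ℝ))) := by ring
        _ = 2 * (2:ℝ)^α * C * ε^α := by rw [e2, mul_one]
    linarith [b1, b2, add_le_add b1 b2]
  -- conclude
  have hρ₁ := hρpos V₁
  have hρ₂ := hρpos V₂
  have e : wignerDensity W h g V₁ / wignerDensity W h g V₂
      = Real.exp (Real.log (wignerDensity W h g V₁) - Real.log (wignerDensity W h g V₂)) := by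
    rw [Real.exp_sub, Real.exp_log hρ₁, Real.exp_log hρ₂]
  rw [e]
  apply Real.exp_le_exp.mpr
  linarith [key]
end

section
/- Conditional exponential bound: let (Σ_j)_{j=1}^n be σ-algebras of events on a probability space and (U_j)_{j=1}^n nonnegative random variables such that for every j, U_j is measurable with respect to Σ_k for every k ≠ j. Suppose there are δ > 0 and p₀ ∈ (0,1] such that for each j, almost surely the conditional probability P(U_j ≥ δ | Σ_j) ≥ p₀. Then E[ exp(-∑_{j=1}^n U_j) ] ≤ exp( -(1 - e^{-δ}) · p₀ · n ). -/
open MeasureTheory ProbabilityTheory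

/-- The indicator function of a set. -/
noncomputable def indic {Ω : Type} (S : Set Ω) : Ω → ℝ := S.indicator fun _ => (1 : ℝ)

/-- The event `{U ≥ δ}`. -/
def geSet {Ω : Type} (U : Ω → ℝ) (δ : ℝ) : Set Ω := {ω | δ ≤ U ω}

lemma indic_nonneg {Ω : Type} (S : Set Ω) (ω : Ω) : 0 ≤ indic S ω := by
  unfold indic; exact Set.indicator_nonneg (fun _ _ => zero_le_one) ω

lemma indic_le_one {Ω : Type} (S : Set Ω) (ω : Ω) : indic S ω ≤ 1 := by
  unfold indic; by_cases h : ω ∈ S <;> simp [h]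

/-- Conditional exponential bound: if each `U j ≥ 0` is measurable with
respect to `sig k` for every `k ≠ j`, and `P(U j ≥ δ | Σ j) ≥ p₀` almost surely, then
`E[exp(-∑ U j)] ≤ exp(-(1 - e^{-δ}) p₀ n)`. -/
theorem conditional_exponential_bound
    (Ω : Type) [MeasureSpace Ω] [IsProbabilityMeasure (ℙ : Measure Ω)]
    (n : ℕ) (sig : Fin n → MeasurableSpace Ω) (hsig : ∀ j, sig j ≤ (inferInstance : MeasurableSpace Ω))
    (U : Fin n → Ω → ℝ) (hU0 : ∀ j ω, 0 ≤ U j ω)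
    (hUmeas : ∀ j k, k ≠ j → Measurable[sig k] (U j))
    (δ p₀ : ℝ) (hδ : 0 < δ) (hp₀ : 0 < p₀) (hp₀1 : p₀ ≤ 1)
    (hcond : ∀ j, ∀ᵐ ω ∂(ℙ : Measure Ω),
      p₀ ≤ ((ℙ : Measure Ω)[indic (geSet (U j) δ) | sig j]) ω) :
    ∫ ω, Real.exp (-(∑ j, U j ω)) ∂(ℙ : Measure Ω)
      ≤ Real.exp (-(1 - Real.exp (-δ)) * p₀ * n) := by
  set c : ℝ := 1 - Real.exp (-δ) with hc
  have hexpδ : Real.exp (-δ) < 1 := by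
    rw [Real.exp_lt_one_iff]; linarith
  have hc0 : 0 < c := by simp [hc]; linarith
  have hcp1 : c * p₀ < 1 := by
    nlinarith [Real.exp_pos (-δ)]
  have hcp0 : 0 < c * p₀ := mul_pos hc0 hp₀
  -- integrability of the indicators
  have hgint : ∀ j, Integrable (indic (geSet (U j) δ)) (ℙ : Measure Ω) := by
    intro j
    by_contra h
    have h0 : ((ℙ : Measure Ω)[indic (geSet (U j) δ) | sig j]) = 0 := condExp_of_not_integrable h
    have := hcond j
    rw [h0] at this
    have : ∃ ω : Ω, p₀ ≤ (0 : Ω → ℝ) ω := this.exists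
    obtain ⟨ω, hω⟩ := this
    simp at hω; linarith
  -- the key induction over finsets
  have key : ∀ s : Finset (Fin n),
      ∫ ω, Real.exp (-(∑ j ∈ s, U j ω)) ∂(ℙ : Measure Ω) ≤ (1 - c * p₀) ^ s.card := by
    intro s
    induction s using Finset.induction_on with
    | empty => simp
    | @insert k t hk ih =>
      by_cases hint : Integrable (fun ω => Real.exp (-(∑ j ∈ insert k t, U j ω))) (ℙ : Measure Ω)
      swap
      · rw [integral_undef hint]
        exact pow_nonneg (by linarith) _
      -- X = exp of minus the sum over t
      set X : Ω → ℝ := fun ω => Real.exp (-(∑ j ∈ t, U j ω)) with hX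
      have hXmeas : StronglyMeasurable[sig k] X := by
        have : Measurable[sig k] X := by
          apply Measurable.exp
          apply Measurable.neg
          exact Finset.measurable_sum t (fun j hj => hUmeas j k (fun h => hk (h ▸ hj)))
        exact this.stronglyMeasurable
      have hX0 : ∀ ω, 0 ≤ X ω := fun ω => (Real.exp_pos _).le
      have hX1 : ∀ ω, X ω ≤ 1 := by
        intro ω
        rw [hX]
        simp only
        rw [Real.exp_le_one_iff]
        simp only [neg_nonpos]
        exact Finset.sum_nonneg fun j _ => hU0 j ω
      have hXint : Integrable X (ℙ : Measure Ω) := by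
        refine Integrable.mono' (integrable_const 1) ((hXmeas.mono (hsig k)).aestronglyMeasurable) ?_
        filter_upwards with ω
        rw [Real.norm_eq_abs, abs_of_nonneg (hX0 ω)]
        exact hX1 ω
      set g : Ω → ℝ := indic (geSet (U k) δ) with hg
      have hg0 : ∀ ω, 0 ≤ g ω := indic_nonneg _
      have hg1 : ∀ ω, g ω ≤ 1 := indic_le_one _
      have hXgint : Integrable (fun ω => X ω * g ω) (ℙ : Measure Ω) := by
        refine Integrable.mono' (integrable_const 1)
          (((hXmeas.mono (hsig k)).aestronglyMeasurable).mul (hgint k).1) ?_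
        filter_upwards with ω
        rw [Real.norm_eq_abs, abs_of_nonneg (mul_nonneg (hX0 ω) (hg0 ω))]
        calc X ω * g ω ≤ 1 * 1 := mul_le_mul (hX1 ω) (hg1 ω) (hg0 ω) zero_le_one
        _ = 1 := one_mul 1
      -- pull-out property
      have hpull : (ℙ : Measure Ω)[fun ω => X ω * g ω | sig k]
          =ᵐ[(ℙ : Measure Ω)] fun ω => X ω * ((ℙ : Measure Ω)[g | sig k]) ω := by
        have := condExp_stronglyMeasurable_mul_of_bound (μ := (ℙ : Measure Ω)) (hsig k)
          hXmeas (hgint k) 1 ?_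
        · exact this
        · filter_upwards with ω
          rw [Real.norm_eq_abs, abs_of_nonneg (hX0 ω)]
          exact hX1 ω
      -- ∫ X g ≥ p₀ ∫ X
      have hXcondint : Integrable (fun ω => X ω * ((ℙ : Measure Ω)[g | sig k]) ω)
          (ℙ : Measure Ω) := (integrable_condExp).congr hpull
      have hXgE : ∫ ω, X ω * g ω ∂(ℙ : Measure Ω)
          = ∫ ω, X ω * ((ℙ : Measure Ω)[g | sig k]) ω ∂(ℙ : Measure Ω) := by
        rw [← integral_condExp (μ := (ℙ : Measure Ω)) (hsig k) (f := fun ω => X ω * g ω)]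
        exact integral_congr_ae hpull
      have hXglb : p₀ * ∫ ω, X ω ∂(ℙ : Measure Ω) ≤ ∫ ω, X ω * g ω ∂(ℙ : Measure Ω) := by
        rw [hXgE, ← integral_const_mul]
        refine integral_mono_ae (hXint.const_mul p₀) hXcondint ?_
        filter_upwards [hcond k] with ω hω
        calc p₀ * X ω ≤ ((ℙ : Measure Ω)[g | sig k]) ω * X ω :=
          mul_le_mul_of_nonneg_right hω (hX0 ω)
        _ = X ω * ((ℙ : Measure Ω)[g | sig k]) ω := mul_comm _ _
      -- pointwise: exp(-(sum over insert)) ≤ X * (1 - c g)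
      have hpt : ∀ ω, Real.exp (-(∑ j ∈ insert k t, U j ω)) ≤ X ω * (1 - c * g ω) := by
        intro ω
        rw [Finset.sum_insert hk, neg_add, Real.exp_add, mul_comm]
        refine mul_le_mul_of_nonneg_left ?_ (hX0 ω)
        by_cases hω : δ ≤ U k ω
        · have : g ω = 1 := by
            rw [hg]; unfold indic geSet
            simp [Set.indicator_of_mem, hω]
          rw [this, mul_one, hc]
          have : Real.exp (-U k ω) ≤ Real.exp (-δ) := by
            rw [Real.exp_le_exp]; linarith
          linarith
        · have : g ω = 0 := by
            rw [hg]; unfold indic geSet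
            simp [Set.indicator_of_notMem, hω]
          rw [this, mul_zero, sub_zero, Real.exp_le_one_iff]
          simp only [neg_nonpos]
          exact hU0 k ω
      have hrhsint : Integrable (fun ω => X ω * (1 - c * g ω)) (ℙ : Measure Ω) := by
        have : (fun ω => X ω * (1 - c * g ω))
            = fun ω => X ω - c * (X ω * g ω) := by
          funext ω; ring
        rw [this]
        exact hXint.sub (hXgint.const_mul c)
      calc ∫ ω, Real.exp (-(∑ j ∈ insert k t, U j ω)) ∂(ℙ : Measure Ω)
          ≤ ∫ ω, X ω * (1 - c * g ω) ∂(ℙ : Measure Ω) :=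
            integral_mono hint hrhsint hpt
        _ = ∫ ω, X ω ∂(ℙ : Measure Ω) - c * ∫ ω, X ω * g ω ∂(ℙ : Measure Ω) := by
            rw [← integral_const_mul, ← integral_sub hXint ((hXgint.const_mul c))]
            congr 1; funext ω; ring
        _ ≤ ∫ ω, X ω ∂(ℙ : Measure Ω) - c * (p₀ * ∫ ω, X ω ∂(ℙ : Measure Ω)) := by
            have := mul_le_mul_of_nonneg_left hXglb hc0.le
            linarith
        _ = (1 - c * p₀) * ∫ ω, X ω ∂(ℙ : Measure Ω) := by ring
        _ ≤ (1 - c * p₀) * (1 - c * p₀) ^ t.card := by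
            refine mul_le_mul_of_nonneg_left ih (by linarith)
        _ = (1 - c * p₀) ^ (insert k t).card := by
            rw [Finset.card_insert_of_notMem hk, pow_succ]; ring
  -- conclude
  have hfin := key Finset.univ
  rw [Finset.card_univ, Fintype.card_fin] at hfin
  calc ∫ ω, Real.exp (-(∑ j, U j ω)) ∂(ℙ : Measure Ω) ≤ (1 - c * p₀) ^ n := hfin
    _ ≤ (Real.exp (-(c * p₀))) ^ n := by
        refine pow_le_pow_left₀ (by linarith) ?_ n
        have := Real.add_one_le_exp (-(c * p₀))
        linarith
    _ = Real.exp (-c * p₀ * n) := by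
        rw [← Real.exp_nat_mul]; ring_nf
    _ = Real.exp (-(1 - Real.exp (-δ)) * p₀ * n) := by rw [hc]
end
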